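/- arXiv:1104.1708 — 6 statements merged into one kernel-verified Lean document; each statement's English description precedes it below -/
import Mathlib

section
/- For every complex number τ, the operation f *_τ g = ∑_{k≥0} (τ^k/(2^k k!)) f^{(k)} g^{(k)} (a finite sum for polynomials) makes the space ℂ[w] of complex polynomials in one variable into a commutative, associative, unital ℂ-algebra: *_τ is ℂ-bilinear, f *_τ g = g *_τ f, (f *_τ g) *_τ h = f *_τ (g *_τ h), and 1 *_τ f = f for all polynomials f, g, h. -/
open Polynomial

/-- The `τ`-product `f *_τ g = ∑_{k≥0} (τ^k/(2^k k!)) f^{(k)} g^{(k)}` on `ℂ[w]`;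
the sum is finite since `derivative^[k] f = 0` for `k > natDegree f`. -/
noncomputable def starProd (τ : ℂ) (f g : Polynomial ℂ) : Polynomial ℂ :=
  ∑ k ∈ Finset.range (f.natDegree + 1),
    (τ ^ k / (2 ^ k * (k.factorial : ℂ))) • (derivative^[k] f * derivative^[k] g)

namespace StarProdAux

open Finset

noncomputable def c (τ : ℂ) (k : ℕ) : ℂ := τ ^ k / (2 ^ k * (k.factorial : ℂ))

noncomputable def sc (τ : ℂ) (p q r : ℕ) : ℂ :=
  τ ^ (p + q + r) / (2 ^ (p + q + r) * (p.factorial : ℂ) * q.factorial * r.factorial)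

noncomputable def S (τ : ℂ) (f g h : Polynomial ℂ) (p q r : ℕ) : Polynomial ℂ :=
  sc τ p q r • (derivative^[q + r] f * derivative^[p + r] g * derivative^[p + q] h)

lemma sc_rot (τ : ℂ) (p q r : ℕ) : sc τ p q r = sc τ q r p := by
  unfold sc
  rw [show p + q + r = q + r + p by ring]
  ring

lemma coeff_eq (τ : ℂ) {m i : ℕ} (hi : i ≤ m) (k : ℕ) :
    c τ m * c τ k * (m.choose i : ℂ) = sc τ i (m - i) k := by
  have hm : i + (m - i) = m := Nat.add_sub_cancel' hi
  unfold c sc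
  rw [hm]
  have h1 : (m.choose i : ℂ) * (i.factorial : ℂ) * ((m - i).factorial : ℂ)
      = (m.factorial : ℂ) := by
    exact_mod_cast congrArg (Nat.cast (R := ℂ)) (Nat.choose_mul_factorial_mul_factorial hi)
  have f1 : (m.factorial : ℂ) ≠ 0 := Nat.cast_ne_zero.2 m.factorial_ne_zero
  have f2 : (k.factorial : ℂ) ≠ 0 := Nat.cast_ne_zero.2 k.factorial_ne_zero
  have f3 : (i.factorial : ℂ) ≠ 0 := Nat.cast_ne_zero.2 i.factorial_ne_zero
  have f4 : ((m - i).factorial : ℂ) ≠ 0 := Nat.cast_ne_zero.2 (m - i).factorial_ne_zero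
  have f5 : (2 : ℂ) ^ m ≠ 0 := pow_ne_zero _ two_ne_zero
  have f6 : (2 : ℂ) ^ k ≠ 0 := pow_ne_zero _ two_ne_zero
  rw [pow_add τ, pow_add 2, div_mul_div_comm, div_mul_eq_mul_div,
    div_eq_div_iff (by exact mul_ne_zero (mul_ne_zero f5 f1) (mul_ne_zero f6 f2))
      (by exact mul_ne_zero (mul_ne_zero (mul_ne_zero (mul_ne_zero f5 f6) f3) f4) f2)]
  linear_combination (τ ^ m * τ ^ k * 2 ^ m * 2 ^ k * (k.factorial : ℂ)) * h1

lemma starProd_eq (τ : ℂ) (f g : Polynomial ℂ) {n : ℕ} (hn : f.natDegree < n) :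
    starProd τ f g = ∑ k ∈ range n, c τ k • (derivative^[k] f * derivative^[k] g) := by
  unfold starProd c
  refine Finset.sum_subset (Finset.range_subset_range.2 hn) ?_
  intro k _ hk
  simp only [mem_range, not_lt] at hk
  rw [Polynomial.iterate_derivative_eq_zero hk, zero_mul, smul_zero]

lemma natDegree_starProd_le (τ : ℂ) (f g : Polynomial ℂ) :
    (starProd τ f g).natDegree ≤ f.natDegree + g.natDegree := by
  refine (Polynomial.natDegree_sum_le _ _).trans ?_
  rw [Finset.fold_max_le]
  refine ⟨Nat.zero_le _, fun k _ => ?_⟩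
  refine (Polynomial.natDegree_smul_le _ _).trans ?_
  refine (Polynomial.natDegree_mul_le).trans ?_
  exact Nat.add_le_add ((Polynomial.natDegree_iterate_derivative f k).trans (Nat.sub_le _ _))
    ((Polynomial.natDegree_iterate_derivative g k).trans (Nat.sub_le _ _))

lemma iterate_derivative_add' (p q : Polynomial ℂ) (k : ℕ) :
    derivative^[k] (p + q) = derivative^[k] p + derivative^[k] q := by
  induction k generalizing p q with
  | zero => simp
  | succ k ih => simp [Function.iterate_succ_apply, ih]

lemma iterate_derivative_finset_sum {α : Type*} (s : Finset α) (p : α → Polynomial ℂ)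
    (k : ℕ) : derivative^[k] (∑ a ∈ s, p a) = ∑ a ∈ s, derivative^[k] (p a) := by
  induction k with
  | zero => simp
  | succ k ih =>
    rw [Function.iterate_succ_apply', ih, derivative_sum]
    simp [Function.iterate_succ_apply']

lemma triangle {M : Type*} [AddCommMonoid M] (N : ℕ) (F : ℕ → ℕ → M)
    (hF : ∀ p q, N ≤ p + q → F p q = 0) :
    ∑ m ∈ range N, ∑ i ∈ range (m + 1), F i (m - i)
      = ∑ p ∈ range N, ∑ q ∈ range N, F p q := by
  rw [Finset.sum_sigma' (range N) (fun m => range (m + 1)) (fun m i => F i (m - i)),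
    ← Finset.sum_product' (range N) (range N) (fun p q => F p q)]
  rw [← Finset.sum_filter_add_sum_filter_not ((range N) ×ˢ (range N))
    (fun p => p.1 + p.2 < N)]
  have h2 : ∑ p ∈ ((range N) ×ˢ (range N)).filter (fun p => ¬ p.1 + p.2 < N),
      F p.1 p.2 = 0 :=
    Finset.sum_eq_zero fun p hp => hF _ _ (le_of_not_gt (Finset.mem_filter.1 hp).2)
  rw [h2, add_zero]
  refine Finset.sum_nbij' (fun x => (x.2, x.1 - x.2)) (fun p => ⟨p.1 + p.2, p.1⟩)
    ?_ ?_ ?_ ?_ ?_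
  · rintro ⟨m, i⟩ hx
    simp only [Finset.mem_sigma, mem_range] at hx
    simp only [Finset.mem_filter, Finset.mem_product, mem_range]
    have hi : i ≤ m := Nat.lt_succ_iff.1 hx.2
    exact ⟨⟨lt_of_le_of_lt hi hx.1, lt_of_le_of_lt (Nat.sub_le _ _) hx.1⟩, by omega⟩
  · rintro ⟨p, q⟩ hp
    simp only [Finset.mem_filter, Finset.mem_product, mem_range] at hp
    simp only [Finset.mem_sigma, mem_range]
    exact ⟨hp.2, by omega⟩
  · rintro ⟨m, i⟩ hx
    simp only [Finset.mem_sigma, mem_range] at hx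
    have hi : i ≤ m := Nat.lt_succ_iff.1 hx.2
    simp only
    congr 1
    all_goals omega
  · rintro ⟨p, q⟩ hp
    simp only
    congr 1
    all_goals omega
  · rintro ⟨m, i⟩ _
    rfl

lemma expand_one (τ : ℂ) (f g h : Polynomial ℂ) {N : ℕ} (hf : f.natDegree < N) (m : ℕ) :
    c τ m • (derivative^[m] (starProd τ f g) * derivative^[m] h)
      = ∑ k ∈ range N, ∑ i ∈ range (m + 1),
          (c τ m * c τ k * (m.choose i : ℂ)) •
            (derivative^[(m - i) + k] f * derivative^[i + k] g * derivative^[m] h) := by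
  rw [starProd_eq τ f g hf, iterate_derivative_finset_sum, Finset.sum_mul, Finset.smul_sum]
  refine Finset.sum_congr rfl fun k _ => ?_
  rw [iterate_derivative_smul, Polynomial.iterate_derivative_mul, Finset.smul_sum,
    Finset.sum_mul, Finset.smul_sum]
  refine Finset.sum_congr rfl fun i _ => ?_
  rw [← Function.iterate_add_apply, ← Function.iterate_add_apply]
  rw [smul_mul_assoc, smul_mul_assoc, ← Nat.cast_smul_eq_nsmul ℂ, smul_smul, smul_smul,
    mul_assoc]

lemma expand_one' (τ : ℂ) (f g h : Polynomial ℂ) {N : ℕ} (hg : g.natDegree < N) (m : ℕ) :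
    c τ m • (derivative^[m] f * derivative^[m] (starProd τ g h))
      = ∑ k ∈ range N, ∑ i ∈ range (m + 1),
          (c τ m * c τ k * (m.choose i : ℂ)) •
            (derivative^[m] f * (derivative^[(m - i) + k] g * derivative^[i + k] h)) := by
  rw [starProd_eq τ g h hg, iterate_derivative_finset_sum, Finset.mul_sum, Finset.smul_sum]
  refine Finset.sum_congr rfl fun k _ => ?_
  rw [iterate_derivative_smul, Polynomial.iterate_derivative_mul, Finset.smul_sum,
    Finset.mul_sum, Finset.smul_sum]
  refine Finset.sum_congr rfl fun i _ => ?_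
  rw [← Function.iterate_add_apply, ← Function.iterate_add_apply]
  rw [mul_smul_comm, mul_smul_comm, ← Nat.cast_smul_eq_nsmul ℂ, smul_smul, smul_smul,
    mul_assoc]

lemma assoc (τ : ℂ) (f g h : Polynomial ℂ) :
    starProd τ (starProd τ f g) h = starProd τ f (starProd τ g h) := by
  set N := f.natDegree + g.natDegree + h.natDegree + 1 with hN
  have hf : f.natDegree < N := by omega
  have hg : g.natDegree < N := by omega
  have hh : h.natDegree < N := by omega
  have hfg : (starProd τ f g).natDegree < N :=
    lt_of_le_of_lt (natDegree_starProd_le τ f g) (by omega)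
  have hL : ∑ m ∈ range N, c τ m • (derivative^[m] (starProd τ f g) * derivative^[m] h)
      = ∑ m ∈ range N, ∑ k ∈ range N, ∑ i ∈ range (m + 1),
          S τ f g h i (m - i) k := by
    refine Finset.sum_congr rfl fun m _ => ?_
    rw [expand_one τ f g h hf m]
    refine Finset.sum_congr rfl fun k _ => Finset.sum_congr rfl fun i hi => ?_
    have hi' : i ≤ m := Nat.lt_succ_iff.1 (mem_range.1 hi)
    rw [coeff_eq τ hi' k]
    unfold S
    rw [Nat.add_sub_cancel' hi']
  have hR : ∑ m ∈ range N, c τ m • (derivative^[m] f * derivative^[m] (starProd τ g h))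
      = ∑ m ∈ range N, ∑ k ∈ range N, ∑ i ∈ range (m + 1),
          S τ f g h k i (m - i) := by
    refine Finset.sum_congr rfl fun m _ => ?_
    rw [expand_one' τ f g h hg m]
    refine Finset.sum_congr rfl fun k _ => Finset.sum_congr rfl fun i hi => ?_
    have hi' : i ≤ m := Nat.lt_succ_iff.1 (mem_range.1 hi)
    rw [coeff_eq τ hi' k, sc_rot τ i (m - i) k, sc_rot τ (m - i) k i]
    unfold S
    rw [Nat.add_sub_cancel' hi', Nat.add_comm k (m - i), Nat.add_comm k i, mul_assoc]
  rw [starProd_eq τ (starProd τ f g) h hfg, hL, starProd_eq τ f (starProd τ g h) hf, hR]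
  have tL : ∀ k, ∑ m ∈ range N, ∑ i ∈ range (m + 1), S τ f g h i (m - i) k
      = ∑ p ∈ range N, ∑ q ∈ range N, S τ f g h p q k := by
    intro k
    refine triangle N (fun p q => S τ f g h p q k) fun p q hpq => ?_
    unfold S
    beta_reduce
    rw [Polynomial.iterate_derivative_eq_zero (lt_of_lt_of_le hh hpq), mul_zero, smul_zero]
  have tR : ∀ k, ∑ m ∈ range N, ∑ i ∈ range (m + 1), S τ f g h k i (m - i)
      = ∑ p ∈ range N, ∑ q ∈ range N, S τ f g h k p q := by
    intro k
    refine triangle N (fun p q => S τ f g h k p q) fun p q hpq => ?_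
    unfold S
    beta_reduce
    rw [Polynomial.iterate_derivative_eq_zero (lt_of_lt_of_le hf hpq), zero_mul, zero_mul,
      smul_zero]
  calc ∑ m ∈ range N, ∑ k ∈ range N, ∑ i ∈ range (m + 1), S τ f g h i (m - i) k
      = ∑ k ∈ range N, ∑ m ∈ range N, ∑ i ∈ range (m + 1), S τ f g h i (m - i) k :=
        Finset.sum_comm
    _ = ∑ k ∈ range N, ∑ p ∈ range N, ∑ q ∈ range N, S τ f g h p q k :=
        Finset.sum_congr rfl fun k _ => tL k
    _ = ∑ p ∈ range N, ∑ k ∈ range N, ∑ q ∈ range N, S τ f g h p q k :=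
        Finset.sum_comm
    _ = ∑ p ∈ range N, ∑ q ∈ range N, ∑ k ∈ range N, S τ f g h p q k :=
        Finset.sum_congr rfl fun p _ => Finset.sum_comm
    _ = ∑ k ∈ range N, ∑ m ∈ range N, ∑ i ∈ range (m + 1), S τ f g h k i (m - i) :=
        Finset.sum_congr rfl fun k _ => (tR k).symm
    _ = ∑ m ∈ range N, ∑ k ∈ range N, ∑ i ∈ range (m + 1), S τ f g h k i (m - i) :=
        Finset.sum_comm

end StarProdAux

open StarProdAux Finset in
/-- For every `τ ∈ ℂ`, the `τ`-product makes `ℂ[w]` a commutative, associative,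
unital `ℂ`-algebra: it is `ℂ`-bilinear, commutative, associative, and `1` is a unit. -/
theorem starProd_comm_assoc_algebra (τ : ℂ) :
    (∀ (a : ℂ) (f f' g : Polynomial ℂ),
      starProd τ (a • f + f') g = a • starProd τ f g + starProd τ f' g) ∧
    (∀ (a : ℂ) (f g g' : Polynomial ℂ),
      starProd τ f (a • g + g') = a • starProd τ f g + starProd τ f g') ∧
    (∀ f g : Polynomial ℂ, starProd τ f g = starProd τ g f) ∧
    (∀ f g h : Polynomial ℂ,
      starProd τ (starProd τ f g) h = starProd τ f (starProd τ g h)) ∧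
    (∀ f : Polynomial ℂ, starProd τ 1 f = f) := by
  refine ⟨?_, ?_, ?_, fun f g h => assoc τ f g h, ?_⟩
  · intro a f f' g
    set N := (a • f + f').natDegree + f.natDegree + f'.natDegree + 1 with hN
    rw [starProd_eq τ _ g (show (a • f + f').natDegree < N by omega),
      starProd_eq τ f g (show f.natDegree < N by omega),
      starProd_eq τ f' g (show f'.natDegree < N by omega),
      Finset.smul_sum, ← Finset.sum_add_distrib]
    refine Finset.sum_congr rfl fun k _ => ?_
    rw [iterate_derivative_add', iterate_derivative_smul, add_mul, smul_add,
      smul_mul_assoc, smul_comm]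
  · intro a f g g'
    unfold starProd
    rw [Finset.smul_sum, ← Finset.sum_add_distrib]
    refine Finset.sum_congr rfl fun k _ => ?_
    rw [iterate_derivative_add', iterate_derivative_smul, mul_add, smul_add,
      mul_smul_comm, smul_comm]
  · intro f g
    set N := f.natDegree + g.natDegree + 1 with hN
    rw [starProd_eq τ f g (show f.natDegree < N by omega),
      starProd_eq τ g f (show g.natDegree < N by omega)]
    exact Finset.sum_congr rfl fun k _ => by rw [mul_comm]
  · intro f
    unfold starProd
    simp
end

section
/- For every complex number τ, the linear map I_0^τ : ℂ[w] → ℂ[w] defined by I_0^τ f = ∑_{k≥0} (τ^k/(4^k k!)) f^{(2k)} (a finite sum) is a bijection with inverse I_0^{−τ}, and it is an algebra isomorphism from (ℂ[w], ·) with the ordinary product to (ℂ[w], *_τ): I_0^τ(f·g) = (I_0^τ f) *_τ (I_0^τ g) for all polynomials f, g. -/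
open Polynomial Finset

/-- The intertwiner `I_0^τ f = ∑_{k≥0} (τ^k/(4^k k!)) f^{(2k)}`; the sum is finite. -/
noncomputable def intertwiner (τ : ℂ) (f : Polynomial ℂ) : Polynomial ℂ :=
  ∑ k ∈ Finset.range (f.natDegree + 1),
    (τ ^ k / (4 ^ k * (k.factorial : ℂ))) • derivative^[2 * k] f

private lemma itd_add (k : ℕ) (p q : Polynomial ℂ) :
    derivative^[k] (p + q) = derivative^[k] p + derivative^[k] q := by
  simp_rw [← Module.End.pow_apply, map_add]

lemma inter_eq (τ : ℂ) (f : Polynomial ℂ) {N : ℕ} (h : f.natDegree < N) :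
    intertwiner τ f = ∑ k ∈ Finset.range N,
      (τ ^ k / (4 ^ k * (k.factorial : ℂ))) • derivative^[2 * k] f := by
  unfold intertwiner
  refine Finset.sum_subset (Finset.range_subset_range.2 h) fun k _ hk => ?_
  have hk' : f.natDegree < 2 * k := by
    simp only [Finset.mem_range, not_lt] at hk; omega
  rw [iterate_derivative_eq_zero hk', smul_zero]

lemma star_eq (τ : ℂ) (f g : Polynomial ℂ) {N : ℕ} (h : f.natDegree < N) :
    starProd τ f g = ∑ k ∈ Finset.range N,
      (τ ^ k / (2 ^ k * (k.factorial : ℂ))) • (derivative^[k] f * derivative^[k] g) := by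
  unfold starProd
  refine Finset.sum_subset (Finset.range_subset_range.2 h) fun k _ hk => ?_
  have hk' : f.natDegree < k := by
    simp only [Finset.mem_range, not_lt] at hk; omega
  rw [iterate_derivative_eq_zero hk', zero_mul, smul_zero]

lemma inter_natDegree_le (τ : ℂ) (f : Polynomial ℂ) :
    (intertwiner τ f).natDegree ≤ f.natDegree := by
  unfold intertwiner
  refine natDegree_sum_le_of_forall_le _ _ fun k _ => ?_
  exact (natDegree_smul_le _ _).trans ((natDegree_iterate_derivative f _).trans (Nat.sub_le _ _))

lemma inter_add (τ : ℂ) (f g : Polynomial ℂ) :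
    intertwiner τ (f + g) = intertwiner τ f + intertwiner τ g := by
  set N := (f + g).natDegree + f.natDegree + g.natDegree + 1 with hN
  rw [inter_eq τ (f + g) (show (f+g).natDegree < N by omega),
      inter_eq τ f (show f.natDegree < N by omega), inter_eq τ g (show g.natDegree < N by omega), ← Finset.sum_add_distrib]
  exact Finset.sum_congr rfl fun k _ => by rw [itd_add, smul_add]

lemma inter_smul (τ a : ℂ) (f : Polynomial ℂ) :
    intertwiner τ (a • f) = a • intertwiner τ f := by
  rw [inter_eq τ (a • f) (show (a • f).natDegree < f.natDegree + 1 from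
        Nat.lt_succ_of_le (natDegree_smul_le _ _)),
      inter_eq τ f (Nat.lt_succ_self _), Finset.smul_sum]
  exact Finset.sum_congr rfl fun k _ => by
    rw [iterate_derivative_smul, smul_comm]

lemma double_sum (M : ℕ) (F : ℕ → ℕ → Polynomial ℂ) (hF : ∀ j k, M ≤ j + k → F j k = 0) :
    ∑ j ∈ Finset.range M, ∑ k ∈ Finset.range M, F j k
      = ∑ n ∈ Finset.range M, ∑ jk ∈ Finset.HasAntidiagonal.antidiagonal n, F jk.1 jk.2 := by
  rw [← Finset.sum_product']
  rw [← Finset.sum_biUnion (by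
    intro a _ b _ hab
    simp only [Finset.disjoint_left]
    intro p hp hp'
    rw [Finset.HasAntidiagonal.mem_antidiagonal] at hp hp'
    omega )]
  refine (Finset.sum_subset ?_ ?_).symm
  · intro p hp
    simp only [Finset.mem_biUnion, Finset.mem_range, Finset.HasAntidiagonal.mem_antidiagonal] at hp
    obtain ⟨n, hn, hs⟩ := hp
    simp only [Finset.mem_product, Finset.mem_range]
    omega
  · intro p _ hp
    simp only [Finset.mem_biUnion, Finset.mem_range, Finset.HasAntidiagonal.mem_antidiagonal] at hp
    push_neg at hp
    exact hF p.1 p.2 (by by_contra h; exact absurd rfl (hp (p.1 + p.2) (by omega)))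

lemma coef_sum (σ τ : ℂ) (n : ℕ) :
    ∑ jk ∈ Finset.HasAntidiagonal.antidiagonal n,
        σ ^ jk.1 / (4 ^ jk.1 * (jk.1.factorial : ℂ)) *
          (τ ^ jk.2 / (4 ^ jk.2 * (jk.2.factorial : ℂ)))
      = (σ + τ) ^ n / (4 ^ n * (n.factorial : ℂ)) := by
  rw [Finset.Nat.sum_antidiagonal_eq_sum_range_succ_mk, add_pow, Finset.sum_div]
  refine Finset.sum_congr rfl fun j hj => ?_
  dsimp only
  have hj' : j ≤ n := Nat.lt_succ_iff.mp (Finset.mem_range.mp hj)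
  have hcf : (n.choose j : ℂ) * (j.factorial : ℂ) * ((n - j).factorial : ℂ)
      = (n.factorial : ℂ) := by
    exact_mod_cast congrArg (Nat.cast : ℕ → ℂ) (Nat.choose_mul_factorial_mul_factorial hj')
  have h4 : (4 : ℂ) ^ j * 4 ^ (n - j) = 4 ^ n := by
    rw [← pow_add]; congr 1; omega
  have key : (4 : ℂ) ^ n * (n.factorial : ℂ)
      = (n.choose j : ℂ) * ((4 ^ j * (j.factorial : ℂ)) * (4 ^ (n - j) * ((n - j).factorial : ℂ))) := by
    rw [← h4]; linear_combination (-((4 : ℂ) ^ j * 4 ^ (n - j))) * hcf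
  have hjf : (j.factorial : ℂ) ≠ 0 := Nat.cast_ne_zero.2 j.factorial_ne_zero
  have hnjf : (((n - j).factorial : ℕ) : ℂ) ≠ 0 := Nat.cast_ne_zero.2 (n - j).factorial_ne_zero
  have h4j : (4 : ℂ) ^ j ≠ 0 := pow_ne_zero _ (by norm_num)
  have h4nj : (4 : ℂ) ^ (n - j) ≠ 0 := pow_ne_zero _ (by norm_num)
  rw [div_mul_div_comm, div_eq_div_iff (mul_ne_zero (mul_ne_zero h4j hjf) (mul_ne_zero h4nj hnjf))
        (mul_ne_zero (pow_ne_zero _ (by norm_num : (4:ℂ) ≠ 0)) (Nat.cast_ne_zero.2 n.factorial_ne_zero))]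
  linear_combination σ ^ j * τ ^ (n - j) * key
lemma inter_comp (σ τ : ℂ) (f : Polynomial ℂ) :
    intertwiner σ (intertwiner τ f) = intertwiner (σ + τ) f := by
  set N := f.natDegree + 1 with hN
  have h1 : (intertwiner τ f).natDegree < N := Nat.lt_succ_of_le (inter_natDegree_le τ f)
  have L : intertwiner σ (intertwiner τ f)
      = ∑ j ∈ Finset.range N, ∑ k ∈ Finset.range N,
          (σ ^ j / (4 ^ j * (j.factorial : ℂ)) * (τ ^ k / (4 ^ k * (k.factorial : ℂ)))) •
            derivative^[2 * (j + k)] f := by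
    rw [inter_eq σ _ h1]
    refine Finset.sum_congr rfl fun j _ => ?_
    rw [inter_eq τ f (Nat.lt_succ_self _), iterate_derivative_sum, Finset.smul_sum]
    refine Finset.sum_congr rfl fun k _ => ?_
    rw [iterate_derivative_smul, smul_smul]
    congr 1
    rw [show 2 * (j + k) = 2 * j + 2 * k by ring, Function.iterate_add_apply]
  rw [L, double_sum N _ (fun j k h => by
        rw [iterate_derivative_eq_zero (show f.natDegree < 2 * (j + k) by omega), smul_zero]),
      inter_eq (σ + τ) f (Nat.lt_succ_self _)]
  refine Finset.sum_congr rfl fun n hn => ?_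
  have hcongr : ∀ jk ∈ Finset.HasAntidiagonal.antidiagonal n,
      (σ ^ jk.1 / (4 ^ jk.1 * (jk.1.factorial : ℂ)) * (τ ^ jk.2 / (4 ^ jk.2 * (jk.2.factorial : ℂ)))) •
          derivative^[2 * (jk.1 + jk.2)] f
        = (σ ^ jk.1 / (4 ^ jk.1 * (jk.1.factorial : ℂ)) * (τ ^ jk.2 / (4 ^ jk.2 * (jk.2.factorial : ℂ)))) •
          derivative^[2 * n] f := by
    intro jk hjk
    rw [Finset.HasAntidiagonal.mem_antidiagonal] at hjk
    rw [hjk]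
  rw [Finset.sum_congr rfl hcongr, ← Finset.sum_smul, coef_sum]

lemma inter_zero (f : Polynomial ℂ) : intertwiner 0 f = f := by
  unfold intertwiner
  rw [Finset.sum_range_succ']
  simp

private lemma itd_X_mul_succ (h : Polynomial ℂ) (m : ℕ) :
    derivative^[m + 1] (X * h) = X * derivative^[m + 1] h + (m + 1) • derivative^[m] h := by
  induction m with
  | zero => simp [derivative_mul]; ring
  | succ m ih =>
    rw [Function.iterate_succ_apply' derivative (m + 1), ih, derivative_add, derivative_mul,
      derivative_X, derivative_smul, one_mul, ← Function.iterate_succ_apply' derivative (m + 1),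
      ← Function.iterate_succ_apply' derivative m, succ_nsmul]
    simp only [Nat.succ_eq_add_one]
    generalize derivative^[m + 1 + 1] h = B
    generalize derivative^[m + 1] h = A
    module

lemma itd_X_mul (h : Polynomial ℂ) (m : ℕ) :
    derivative^[m] (X * h) = X * derivative^[m] h + m • derivative^[m - 1] h := by
  cases m with
  | zero => simp
  | succ m => exact itd_X_mul_succ h m

private lemma scal1 (τ : ℂ) (k : ℕ) :
    τ ^ (k + 1) / (4 ^ (k + 1) * ((k + 1).factorial : ℂ)) * ((2 * (k + 1) : ℕ) : ℂ)
      = τ / 2 * (τ ^ k / (4 ^ k * (k.factorial : ℂ))) := by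
  have h1 : (((k + 1).factorial : ℕ) : ℂ) = ((k : ℂ) + 1) * (k.factorial : ℂ) := by
    push_cast [Nat.factorial_succ]; ring
  have h2 : (k.factorial : ℂ) ≠ 0 := Nat.cast_ne_zero.2 k.factorial_ne_zero
  have h3 : ((k : ℂ) + 1) ≠ 0 := Nat.cast_add_one_ne_zero k
  have h4 : (4 : ℂ) ^ k ≠ 0 := pow_ne_zero _ (by norm_num)
  rw [h1]
  push_cast
  field_simp
  ring

lemma inter_X_mul (τ : ℂ) (h : Polynomial ℂ) :
    intertwiner τ (X * h) = X * intertwiner τ h + (τ / 2) • derivative (intertwiner τ h) := by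
  set d := h.natDegree with hd
  have hXh : (X * h).natDegree < d + 2 := by
    have := natDegree_mul_le (p := (X : Polynomial ℂ)) (q := h)
    rw [natDegree_X] at this; omega
  rw [inter_eq τ (X * h) hXh, inter_eq τ h (show d < d + 2 by omega), Finset.mul_sum,
    derivative_sum, Finset.smul_sum]
  have LH : ∀ k : ℕ, (τ ^ k / (4 ^ k * (k.factorial : ℂ))) • derivative^[2 * k] (X * h)
      = (τ ^ k / (4 ^ k * (k.factorial : ℂ))) • (X * derivative^[2 * k] h)
        + (τ ^ k / (4 ^ k * (k.factorial : ℂ))) • ((2 * k) • derivative^[2 * k - 1] h) := by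
    intro k; rw [itd_X_mul, smul_add]
  rw [Finset.sum_congr rfl fun k _ => LH k, Finset.sum_add_distrib]
  congr 1
  · exact Finset.sum_congr rfl fun k _ => (mul_smul_comm _ _ _).symm
  · have RH : ∀ k : ℕ,
        (τ / 2) • derivative ((τ ^ k / (4 ^ k * (k.factorial : ℂ))) • derivative^[2 * k] h)
          = (τ / 2 * (τ ^ k / (4 ^ k * (k.factorial : ℂ)))) • derivative^[2 * k + 1] h := by
      intro k
      rw [derivative_smul, smul_smul, ← Function.iterate_succ_apply' derivative (2 * k)]
    rw [Finset.sum_congr rfl fun k _ => RH k, Finset.sum_range_succ' _ (d + 1),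
      Finset.sum_range_succ _ (d + 1)]
    have hz1 : (τ ^ 0 / (4 ^ 0 * ((0).factorial : ℂ))) • ((2 * 0) • derivative^[2 * 0 - 1] h) = 0 := by
      simp
    have hz2 : (τ / 2 * (τ ^ (d + 1) / (4 ^ (d + 1) * (((d + 1)).factorial : ℂ)))) •
        derivative^[2 * (d + 1) + 1] h = 0 := by
      rw [iterate_derivative_eq_zero (show h.natDegree < 2 * (d + 1) + 1 by omega), smul_zero]
    rw [hz1, hz2, add_zero, add_zero]
    refine Finset.sum_congr rfl fun k _ => ?_
    rw [show 2 * (k + 1) - 1 = 2 * k + 1 by omega, ← Nat.cast_smul_eq_nsmul ℂ (2 * (k + 1)),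
      smul_smul, scal1]

private lemma scal2 (τ : ℂ) (k : ℕ) :
    τ ^ (k + 1) / (2 ^ (k + 1) * ((k + 1).factorial : ℂ)) * (((k + 1 : ℕ)) : ℂ)
      = τ / 2 * (τ ^ k / (2 ^ k * (k.factorial : ℂ))) := by
  have h1 : (((k + 1).factorial : ℕ) : ℂ) = ((k : ℂ) + 1) * (k.factorial : ℂ) := by
    push_cast [Nat.factorial_succ]; ring
  have h2 : (k.factorial : ℂ) ≠ 0 := Nat.cast_ne_zero.2 k.factorial_ne_zero
  have h3 : ((k : ℂ) + 1) ≠ 0 := Nat.cast_add_one_ne_zero k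
  have h4 : (2 : ℂ) ^ k ≠ 0 := pow_ne_zero _ (by norm_num)
  rw [h1]
  push_cast
  field_simp
  ring

lemma star_C (τ a : ℂ) (G : Polynomial ℂ) : starProd τ (C a) G = C a * G := by
  simp [starProd, natDegree_C]

lemma inter_C (τ a : ℂ) : intertwiner τ (C a) = C a := by
  simp [intertwiner, natDegree_C]

lemma star_add_left (τ : ℂ) (F₁ F₂ G : Polynomial ℂ) :
    starProd τ (F₁ + F₂) G = starProd τ F₁ G + starProd τ F₂ G := by
  set N := (F₁ + F₂).natDegree + F₁.natDegree + F₂.natDegree + 1 with hN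
  rw [star_eq τ _ G (show (F₁ + F₂).natDegree < N by omega),
    star_eq τ F₁ G (show F₁.natDegree < N by omega),
    star_eq τ F₂ G (show F₂.natDegree < N by omega), ← Finset.sum_add_distrib]
  exact Finset.sum_congr rfl fun k _ => by rw [itd_add, add_mul, smul_add]

lemma star_X (τ : ℂ) (F G : Polynomial ℂ) :
    starProd τ (X * F + (τ / 2) • derivative F) G
      = X * starProd τ F G + (τ / 2) • derivative (starProd τ F G) := by
  set d := F.natDegree with hd
  have h1 : (X * F + (τ / 2) • derivative F).natDegree < d + 2 := by
    have h2 := natDegree_mul_le (p := (X : Polynomial ℂ)) (q := F)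
    rw [natDegree_X] at h2
    have h3 : ((τ / 2) • derivative F).natDegree ≤ d :=
      le_trans (natDegree_smul_le _ _) (le_trans (natDegree_derivative_le F) (by omega))
    have h4 := natDegree_add_le (X * F) ((τ / 2) • derivative F)
    omega
  rw [star_eq τ _ G h1, star_eq τ F G (show d < d + 2 by omega), Finset.mul_sum,
    derivative_sum, Finset.smul_sum, ← Finset.sum_add_distrib]
  have LH : ∀ k : ℕ,
      (τ ^ k / (2 ^ k * (k.factorial : ℂ))) •
          (derivative^[k] (X * F + (τ / 2) • derivative F) * derivative^[k] G)
        = (τ ^ k / (2 ^ k * (k.factorial : ℂ))) • (X * (derivative^[k] F * derivative^[k] G))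
          + (τ ^ k / (2 ^ k * (k.factorial : ℂ))) •
              (k • (derivative^[k - 1] F * derivative^[k] G))
          + (τ / 2 * (τ ^ k / (2 ^ k * (k.factorial : ℂ)))) •
              (derivative^[k + 1] F * derivative^[k] G) := by
    intro k
    rw [itd_add, itd_X_mul, iterate_derivative_smul, ← Function.iterate_succ_apply derivative k F,
      add_mul, add_mul, mul_assoc, smul_mul_assoc (τ / 2), smul_mul_assoc k]
    simp only [Nat.succ_eq_add_one]
    module
  have RH : ∀ k : ℕ,
      X * ((τ ^ k / (2 ^ k * (k.factorial : ℂ))) • (derivative^[k] F * derivative^[k] G))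
          + (τ / 2) • derivative ((τ ^ k / (2 ^ k * (k.factorial : ℂ))) •
              (derivative^[k] F * derivative^[k] G))
        = (τ ^ k / (2 ^ k * (k.factorial : ℂ))) • (X * (derivative^[k] F * derivative^[k] G))
          + ((τ / 2 * (τ ^ k / (2 ^ k * (k.factorial : ℂ)))) •
              (derivative^[k + 1] F * derivative^[k] G)
            + (τ / 2 * (τ ^ k / (2 ^ k * (k.factorial : ℂ)))) •
              (derivative^[k] F * derivative^[k + 1] G)) := by
    intro k
    rw [mul_smul_comm, derivative_smul, derivative_mul,
      ← Function.iterate_succ_apply' derivative k F, ← Function.iterate_succ_apply' derivative k G]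
    simp only [Nat.succ_eq_add_one]
    module
  rw [Finset.sum_congr rfl fun k _ => LH k, Finset.sum_congr rfl fun k _ => RH k,
    Finset.sum_add_distrib, Finset.sum_add_distrib, Finset.sum_add_distrib, Finset.sum_add_distrib]
  have key : ∑ k ∈ Finset.range (d + 2),
        (τ ^ k / (2 ^ k * (k.factorial : ℂ))) •
          (k • (derivative^[k - 1] F * derivative^[k] G))
      = ∑ k ∈ Finset.range (d + 2),
        (τ / 2 * (τ ^ k / (2 ^ k * (k.factorial : ℂ)))) •
          (derivative^[k] F * derivative^[k + 1] G) := by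
    rw [Finset.sum_range_succ' _ (d + 1), Finset.sum_range_succ _ (d + 1)]
    have hz1 : (τ ^ 0 / (2 ^ 0 * ((0).factorial : ℂ))) •
        ((0 : ℕ) • (derivative^[0 - 1] F * derivative^[0] G)) = 0 := by simp
    have hz2 : (τ / 2 * (τ ^ (d + 1) / (2 ^ (d + 1) * (((d + 1)).factorial : ℂ)))) •
        (derivative^[d + 1] F * derivative^[d + 1 + 1] G) = 0 := by
      rw [iterate_derivative_eq_zero (show F.natDegree < d + 1 by omega), zero_mul, smul_zero]
    rw [hz1, hz2, add_zero, add_zero]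
    refine Finset.sum_congr rfl fun k _ => ?_
    rw [show k + 1 - 1 = k from rfl, ← Nat.cast_smul_eq_nsmul ℂ (k + 1), smul_smul, scal2]
  rw [key]
  abel

lemma inter_mul (τ : ℂ) (f g : Polynomial ℂ) :
    intertwiner τ (f * g) = starProd τ (intertwiner τ f) (intertwiner τ g) := by
  induction f using Polynomial.induction_on with
  | C a => rw [inter_C, star_C, ← smul_eq_C_mul, inter_smul, smul_eq_C_mul]
  | add p q hp hq => rw [add_mul, inter_add, inter_add, hp, hq, star_add_left]
  | monomial n a ih =>
    have e1 : C a * X ^ (n + 1) = X * (C a * X ^ n) := by ring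
    rw [e1, mul_assoc, inter_X_mul, inter_X_mul, ih, star_X]

/-- `I_0^τ` is a linear bijection of `ℂ[w]` with inverse `I_0^{−τ}`, and is an
algebra isomorphism from `(ℂ[w], ·)` to `(ℂ[w], *_τ)`. -/
theorem intertwiner_bijective_algebra_iso (τ : ℂ) :
    (∀ (a : ℂ) (f g : Polynomial ℂ),
      intertwiner τ (a • f + g) = a • intertwiner τ f + intertwiner τ g) ∧
    (∀ f : Polynomial ℂ, intertwiner (-τ) (intertwiner τ f) = f) ∧
    (∀ f : Polynomial ℂ, intertwiner τ (intertwiner (-τ) f) = f) ∧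
    Function.Bijective (intertwiner τ) ∧
    (∀ f g : Polynomial ℂ,
      intertwiner τ (f * g) = starProd τ (intertwiner τ f) (intertwiner τ g)) := by
  have hleft : ∀ f : Polynomial ℂ, intertwiner (-τ) (intertwiner τ f) = f := fun f => by
    rw [inter_comp, neg_add_cancel, inter_zero]
  have hright : ∀ f : Polynomial ℂ, intertwiner τ (intertwiner (-τ) f) = f := fun f => by
    rw [inter_comp, add_neg_cancel, inter_zero]
  refine ⟨fun a f g => by rw [inter_add, inter_smul], hleft, hright, ?_, inter_mul τ⟩
  exact Function.bijective_iff_has_inverse.mpr ⟨intertwiner (-τ), hleft, hright⟩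
end

section
/- Let τ ∈ ℂ. For polynomials p, q ∈ ℂ[w] and an entire function f : ℂ → ℂ, the τ-products p *_τ f, f *_τ p (finite sums, since all but finitely many derivatives of a polynomial vanish) satisfy the associativity laws: p *_τ (q *_τ f) = (p *_τ q) *_τ f, p *_τ (f *_τ q) = (p *_τ f) *_τ q, and (f *_τ p) *_τ q = f *_τ (p *_τ q). -/
open Polynomial

/-- The `τ`-product `p *_τ f = f *_τ p` of a polynomial `p` and a function `f`
(a finite sum, since the derivatives of `p` eventually vanish). -/
noncomputable def starPF (τ : ℂ) (p : Polynomial ℂ) (f : ℂ → ℂ) : ℂ → ℂ :=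
  fun w => ∑ k ∈ Finset.range (p.natDegree + 1),
    τ ^ k / (2 ^ k * (k.factorial : ℂ)) * (derivative^[k] p).eval w * iteratedDeriv k f w

namespace StarAux

noncomputable def c (τ : ℂ) (k : ℕ) : ℂ := τ ^ k / (2 ^ k * (k.factorial : ℂ))

lemma c_succ (τ : ℂ) (k : ℕ) : c τ (k + 1) * ((k : ℂ) + 1) = τ / 2 * c τ k := by
  have h2 : (2 : ℂ) ^ k ≠ 0 := pow_ne_zero _ two_ne_zero
  have hk : (k.factorial : ℂ) ≠ 0 := Nat.cast_ne_zero.2 k.factorial_ne_zero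
  have hk1 : (k : ℂ) + 1 ≠ 0 := by
    have : ((k + 1 : ℕ) : ℂ) ≠ 0 := Nat.cast_ne_zero.2 (Nat.succ_ne_zero k)
    push_cast at this; exact this
  simp only [c, Nat.factorial_succ, pow_succ]
  push_cast
  field_simp

lemma iter_deriv_add (k : ℕ) (p q : ℂ[X]) :
    derivative^[k] (p + q) = derivative^[k] p + derivative^[k] q := by
  induction k with
  | zero => rfl
  | succ k ih => simp [Function.iterate_succ_apply', ih]

lemma starPF_eq (τ : ℂ) (p : ℂ[X]) (f : ℂ → ℂ) {N : ℕ} (h : p.natDegree < N) (w : ℂ) :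
    starPF τ p f w =
      ∑ k ∈ Finset.range N, c τ k * (derivative^[k] p).eval w * iteratedDeriv k f w := by
  unfold starPF c
  apply Finset.sum_subset (Finset.range_subset_range.2 h)
  intro k hk hk'
  have hdeg : p.natDegree < k := by
    simp only [Finset.mem_range, not_lt] at hk'
    omega
  rw [Polynomial.iterate_derivative_eq_zero hdeg]
  simp

lemma starProd_eq (τ : ℂ) (p q : ℂ[X]) {N : ℕ} (h : p.natDegree < N) :
    starProd τ p q =
      ∑ k ∈ Finset.range N, (c τ k) • (derivative^[k] p * derivative^[k] q) := by
  unfold starProd c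
  apply Finset.sum_subset (Finset.range_subset_range.2 h)
  intro k hk hk'
  have hdeg : p.natDegree < k := by
    simp only [Finset.mem_range, not_lt] at hk'
    omega
  rw [Polynomial.iterate_derivative_eq_zero hdeg]
  simp

lemma starProd_comm (τ : ℂ) (p q : ℂ[X]) : starProd τ p q = starProd τ q p := by
  set N := max p.natDegree q.natDegree + 1 with hN
  rw [starProd_eq τ p q (show p.natDegree < N by omega),
    starProd_eq τ q p (show q.natDegree < N by omega)]
  exact Finset.sum_congr rfl fun k _ => by rw [mul_comm]

lemma starPF_add_left (τ : ℂ) (p q : ℂ[X]) (f : ℂ → ℂ) (w : ℂ) :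
    starPF τ (p + q) f w = starPF τ p f w + starPF τ q f w := by
  set N := max p.natDegree q.natDegree + 1 with hN
  have hpq : (p + q).natDegree < N := by
    have := Polynomial.natDegree_add_le p q
    simp only [le_max_iff, sup_le_iff] at this ⊢
    omega
  rw [starPF_eq τ (p + q) f hpq, starPF_eq τ p f (show p.natDegree < N by omega),
    starPF_eq τ q f (show q.natDegree < N by omega), ← Finset.sum_add_distrib]
  exact Finset.sum_congr rfl fun k _ => by rw [iter_deriv_add, eval_add]; ring

lemma starPF_smul_left (τ : ℂ) (a : ℂ) (p : ℂ[X]) (f : ℂ → ℂ) (w : ℂ) :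
    starPF τ (a • p) f w = a * starPF τ p f w := by
  have h : (a • p).natDegree < p.natDegree + 1 :=
    lt_of_le_of_lt (Polynomial.natDegree_smul_le a p) (Nat.lt_succ_self _)
  rw [starPF_eq τ (a • p) f h, starPF_eq τ p f (Nat.lt_succ_self _), Finset.mul_sum]
  refine Finset.sum_congr rfl fun k _ => ?_
  rw [Polynomial.iterate_derivative_smul, Polynomial.smul_eq_C_mul, eval_mul, eval_C]
  ring

lemma starPF_C (τ : ℂ) (a : ℂ) (f : ℂ → ℂ) (w : ℂ) : starPF τ (C a) f w = a * f w := by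
  simp [starPF]

lemma iter_deriv_X_mul (p : ℂ[X]) (k : ℕ) :
    derivative^[k + 1] (X * p) =
      X * derivative^[k + 1] p + ((k : ℂ[X]) + 1) * derivative^[k] p := by
  induction k with
  | zero => simp [derivative_mul]; ring
  | succ k ih =>
    rw [Function.iterate_succ_apply', ih]
    rw [derivative_add, derivative_mul, derivative_mul, derivative_X]
    rw [← Function.iterate_succ_apply' derivative (k + 1) p,
      ← Function.iterate_succ_apply' derivative k p]
    have : derivative ((k : ℂ[X]) + 1) = 0 := by simp
    rw [this]
    push_cast
    ring

lemma starPF_X_mul (τ : ℂ) (p : ℂ[X]) (f : ℂ → ℂ) (w : ℂ) :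
    starPF τ (X * p) f w = w * starPF τ p f w + τ / 2 * starPF τ p (deriv f) w := by
  set N := p.natDegree + 1 with hN
  have hXp : (X * p).natDegree < N + 1 := by
    have h1 : (X * p).natDegree ≤ X.natDegree + p.natDegree := Polynomial.natDegree_mul_le
    have h2 : (X : ℂ[X]).natDegree = 1 := Polynomial.natDegree_X
    omega
  rw [starPF_eq τ (X * p) f hXp w, starPF_eq τ p f (show p.natDegree < N + 1 by omega) w,
    starPF_eq τ p (deriv f) (show p.natDegree < N by omega) w]
  rw [Finset.sum_range_succ' (fun k => c τ k * (derivative^[k] (X * p)).eval w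
      * iteratedDeriv k f w) N,
    Finset.sum_range_succ' (fun k => c τ k * (derivative^[k] p).eval w
      * iteratedDeriv k f w) N]
  have hterm : ∀ k ∈ Finset.range N,
      c τ (k + 1) * (derivative^[k + 1] (X * p)).eval w * iteratedDeriv (k + 1) f w =
        w * (c τ (k + 1) * (derivative^[k + 1] p).eval w * iteratedDeriv (k + 1) f w) +
        τ / 2 * (c τ k * (derivative^[k] p).eval w * iteratedDeriv k (deriv f) w) := by
    intro k _
    rw [iter_deriv_X_mul, eval_add, eval_mul, eval_mul, eval_X, eval_add, eval_one,
      eval_natCast, ← iteratedDeriv_succ']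
    linear_combination ((derivative^[k] p).eval w * iteratedDeriv (k + 1) f w) * c_succ τ k
  rw [Finset.sum_congr rfl hterm, Finset.sum_add_distrib]
  simp only [Function.iterate_zero_apply, iteratedDeriv_zero, eval_mul, eval_X]
  rw [← Finset.mul_sum, ← Finset.mul_sum]
  ring

lemma starProd_C (τ : ℂ) (a : ℂ) (q : ℂ[X]) : starProd τ (C a) q = C a * q := by
  simp [starProd]

lemma starProd_add_left (τ : ℂ) (p₁ p₂ q : ℂ[X]) :
    starProd τ (p₁ + p₂) q = starProd τ p₁ q + starProd τ p₂ q := by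
  set N := max p₁.natDegree p₂.natDegree + 1 with hN
  have hpq : (p₁ + p₂).natDegree < N := by
    have := Polynomial.natDegree_add_le p₁ p₂
    simp only [le_max_iff, sup_le_iff] at this ⊢
    omega
  rw [starProd_eq τ (p₁ + p₂) q hpq, starProd_eq τ p₁ q (show p₁.natDegree < N by omega),
    starProd_eq τ p₂ q (show p₂.natDegree < N by omega), ← Finset.sum_add_distrib]
  exact Finset.sum_congr rfl fun k _ => by rw [iter_deriv_add, add_mul, smul_add]

lemma starProd_smul_left (τ : ℂ) (a : ℂ) (p q : ℂ[X]) :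
    starProd τ (a • p) q = a • starProd τ p q := by
  have h : (a • p).natDegree < p.natDegree + 1 :=
    lt_of_le_of_lt (Polynomial.natDegree_smul_le a p) (Nat.lt_succ_self _)
  rw [starProd_eq τ (a • p) q h, starProd_eq τ p q (Nat.lt_succ_self _), Finset.smul_sum]
  refine Finset.sum_congr rfl fun k _ => ?_
  rw [Polynomial.iterate_derivative_smul]
  rw [smul_mul_assoc, smul_comm]

lemma starProd_X_mul (τ : ℂ) (p q : ℂ[X]) :
    starProd τ (X * p) q =
      X * starProd τ p q + (τ / 2) • starProd τ p (derivative q) := by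
  set N := p.natDegree + 1 with hN
  have hXp : (X * p).natDegree < N + 1 := by
    have h1 : (X * p).natDegree ≤ X.natDegree + p.natDegree := Polynomial.natDegree_mul_le
    have h2 : (X : ℂ[X]).natDegree = 1 := Polynomial.natDegree_X
    omega
  rw [starProd_eq τ (X * p) q hXp, starProd_eq τ p q (show p.natDegree < N + 1 by omega),
    starProd_eq τ p (derivative q) (show p.natDegree < N by omega)]
  rw [Finset.sum_range_succ' (fun k => (c τ k) • (derivative^[k] (X * p) * derivative^[k] q)) N,
    Finset.sum_range_succ' (fun k => (c τ k) • (derivative^[k] p * derivative^[k] q)) N]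
  have hterm : ∀ k ∈ Finset.range N,
      (c τ (k + 1)) • (derivative^[k + 1] (X * p) * derivative^[k + 1] q) =
        X * ((c τ (k + 1)) • (derivative^[k + 1] p * derivative^[k + 1] q)) +
        (τ / 2) • ((c τ k) • (derivative^[k] p * derivative^[k] (derivative q))) := by
    intro k _
    rw [iter_deriv_X_mul, ← Function.iterate_succ_apply derivative k q]
    have hC : C (c τ (k + 1)) * ((k : ℂ[X]) + 1) = C (τ / 2) * C (c τ k) := by
      rw [← Polynomial.C_eq_natCast, ← C_1, ← C_add, ← C_mul, ← C_mul, c_succ]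
    simp only [Polynomial.smul_eq_C_mul]
    linear_combination (derivative^[k] p * derivative^[k + 1] q) * hC
  rw [Finset.sum_congr rfl hterm, Finset.sum_add_distrib]
  simp only [Function.iterate_zero_apply]
  rw [← Finset.mul_sum, ← Finset.smul_sum]
  simp only [Polynomial.smul_eq_C_mul]
  ring

lemma diff_iter {f : ℂ → ℂ} (hf : Differentiable ℂ f) (k : ℕ) :
    Differentiable ℂ (iteratedDeriv k f) :=
  (hf.contDiff (n := ⊤)).differentiable_iteratedDeriv k (by simp)

lemma starPF_differentiable (τ : ℂ) (p : ℂ[X]) (f : ℂ → ℂ) (hf : Differentiable ℂ f) :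
    Differentiable ℂ (starPF τ p f) := by
  unfold starPF
  apply Differentiable.fun_sum
  intro k _
  exact ((differentiable_const _).mul (Polynomial.differentiable _)).mul (diff_iter hf k)

lemma deriv_starPF (τ : ℂ) (q : ℂ[X]) (f : ℂ → ℂ) (hf : Differentiable ℂ f) (w : ℂ) :
    deriv (starPF τ q f) w = starPF τ (derivative q) f w + starPF τ q (deriv f) w := by
  set N := q.natDegree + 1 with hN
  have hterm : ∀ k ∈ Finset.range N, HasDerivAt
      (fun z => c τ k * (derivative^[k] q).eval z * iteratedDeriv k f z)
      (c τ k * (derivative^[k + 1] q).eval w * iteratedDeriv k f w +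
        c τ k * (derivative^[k] q).eval w * iteratedDeriv (k + 1) f w) w := by
    intro k _
    have hp : HasDerivAt (fun z => c τ k * (derivative^[k] q).eval z)
        (c τ k * (derivative^[k + 1] q).eval w) w := by
      have := (Polynomial.hasDerivAt (derivative^[k] q) w).const_mul (c τ k)
      rwa [← Function.iterate_succ_apply' derivative k q] at this
    have hD : HasDerivAt (iteratedDeriv k f) (iteratedDeriv (k + 1) f w) w := by
      have := ((diff_iter hf k) w).hasDerivAt
      rwa [← iteratedDeriv_succ] at this
    exact hp.mul hD
  have hsum := (HasDerivAt.fun_sum hterm).deriv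
  have hfun : starPF τ q f = fun z => ∑ k ∈ Finset.range N,
      c τ k * (derivative^[k] q).eval z * iteratedDeriv k f z := by
    funext z; exact starPF_eq τ q f (Nat.lt_succ_self _) z
  rw [hfun, hsum, Finset.sum_add_distrib]
  congr 1
  · rw [starPF_eq τ (derivative q) f
      (show (derivative q).natDegree < N by
        have := Polynomial.natDegree_derivative_le q; omega) w]
    exact Finset.sum_congr rfl fun k _ => by
      rw [← Function.iterate_succ_apply derivative k q]
  · rw [starPF_eq τ q (deriv f) (Nat.lt_succ_self _) w]
    exact Finset.sum_congr rfl fun k _ => by rw [iteratedDeriv_succ']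

lemma starPF_add_right (τ : ℂ) (p : ℂ[X]) (g h : ℂ → ℂ) (hg : Differentiable ℂ g)
    (hh : Differentiable ℂ h) (w : ℂ) :
    starPF τ p (fun z => g z + h z) w = starPF τ p g w + starPF τ p h w := by
  unfold starPF
  rw [← Finset.sum_add_distrib]
  refine Finset.sum_congr rfl fun k _ => ?_
  have hadd : iteratedDeriv k (fun z => g z + h z) w =
      iteratedDeriv k g w + iteratedDeriv k h w := by
    simp only [← iteratedDerivWithin_univ]
    exact iteratedDerivWithin_add (Set.mem_univ w) uniqueDiffOn_univ
      ((hg.contDiff (n := k)).contDiffWithinAt) ((hh.contDiff (n := k)).contDiffWithinAt)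
  rw [hadd]; ring

end StarAux

/-- Associativity of the `τ`-product when two of the three factors are polynomials:
`p *_τ (q *_τ f) = (p *_τ q) *_τ f`, `p *_τ (f *_τ q) = (p *_τ f) *_τ q`, and
`(f *_τ p) *_τ q = f *_τ (p *_τ q)` (recall `f *_τ p = p *_τ f` by the symmetry
of the defining formula). -/
theorem starPF_assoc (τ : ℂ) (p q : Polynomial ℂ) (f : ℂ → ℂ)
    (hf : Differentiable ℂ f) :
    starPF τ p (starPF τ q f) = starPF τ (starProd τ p q) f ∧
    starPF τ p (starPF τ q f) = starPF τ q (starPF τ p f) ∧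
    starPF τ q (starPF τ p f) = starPF τ (starProd τ p q) f := by
  have key : ∀ (p q : ℂ[X]) (f : ℂ → ℂ), Differentiable ℂ f →
      starPF τ p (starPF τ q f) = starPF τ (starProd τ p q) f := by
    intro p
    induction p using Polynomial.induction_on with
    | C a =>
      intro q f hf; funext w
      rw [StarAux.starPF_C, StarAux.starProd_C, ← Polynomial.smul_eq_C_mul,
        StarAux.starPF_smul_left]
    | add p₁ p₂ ih₁ ih₂ =>
      intro q f hf; funext w
      rw [StarAux.starPF_add_left, StarAux.starProd_add_left, StarAux.starPF_add_left,
        congrFun (ih₁ q f hf) w, congrFun (ih₂ q f hf) w]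
    | monomial n a ih =>
      intro q f hf; funext w
      have hX : C a * X ^ (n + 1) = X * (C a * X ^ n) := by ring
      set r := C a * X ^ n with hr
      rw [hX]
      have hf' : Differentiable ℂ (deriv f) := by
        have := StarAux.diff_iter hf 1
        rwa [iteratedDeriv_one] at this
      have hdG : deriv (starPF τ q f) = fun z =>
          starPF τ (derivative q) f z + starPF τ q (deriv f) z :=
        funext fun z => StarAux.deriv_starPF τ q f hf z
      rw [StarAux.starPF_X_mul, hdG,
        StarAux.starPF_add_right τ r _ _
          (StarAux.starPF_differentiable τ (derivative q) f hf)
          (StarAux.starPF_differentiable τ q (deriv f) hf') w,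
        congrFun (ih q f hf) w, congrFun (ih (derivative q) f hf) w,
        congrFun (ih q (deriv f) hf') w,
        StarAux.starProd_X_mul, StarAux.starPF_add_left, StarAux.starPF_smul_left,
        StarAux.starPF_X_mul]
      ring
  have h1 := key p q f hf
  have h2 := key q p f hf
  have hc : starProd τ q p = starProd τ p q := StarAux.starProd_comm τ q p
  exact ⟨h1, by rw [h1, h2, hc], by rw [h2, hc]⟩
end

section
/- Let τ ∈ ℂ with Re τ > 0. Suppose f : ℂ → ℂ is entire, satisfies f(w+π) = f(w) for all w ∈ ℂ, and satisfies e^{−τ} e^{2iw} f(w+iτ) = f(w) for all w ∈ ℂ. Then there exists a constant c ∈ ℂ such that f(w) = c ∑_{n∈ℤ} e^{−n²τ} e^{2niw} for all w ∈ ℂ, i.e. f = c·θ₃(·,τ). -/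
open Complex

/-- For `Re τ > 0`: an entire function which is `π`-periodic and satisfies the
`τ`-expression `e^{−τ}e^{2iw} f(w+iτ) = f(w)` of `(e_*^{2iw} − 1) *_τ f = 0`
is a constant multiple of Jacobi's theta function
`θ₃(w,τ) = ∑_{n∈ℤ} e^{−n²τ} e^{2niw}`. -/
theorem eigenfunction_is_theta3 (τ : ℂ) (hτ : 0 < τ.re) (f : ℂ → ℂ)
    (hf : Differentiable ℂ f)
    (hper : ∀ w : ℂ, f (w + (Real.pi : ℂ)) = f w)
    (heq : ∀ w : ℂ,
      Complex.exp (-τ) * Complex.exp (2 * Complex.I * w) * f (w + Complex.I * τ) = f w) :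
    ∃ c : ℂ, ∀ w : ℂ, f w =
      c * ∑' n : ℤ, Complex.exp (-(n : ℂ) ^ 2 * τ) *
        Complex.exp (2 * (n : ℂ) * Complex.I * w) := by
  have hπ : (0:ℝ) < Real.pi := Real.pi_pos
  have hπc : (Real.pi : ℂ) ≠ 0 := Complex.ofReal_ne_zero.mpr Real.pi_pos.ne'
  haveI : Fact (0 < Real.pi) := ⟨hπ⟩
  set g : ℤ → ℂ → ℂ := fun n ζ => f ζ * Complex.exp (-(2:ℂ) * n * I * ζ) with hgdef
  have hgd : ∀ n : ℤ, Differentiable ℂ (g n) := fun n =>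
    hf.mul (((differentiable_const _).mul differentiable_id).cexp)
  have hgper : ∀ (n : ℤ) (ζ : ℂ), g n (ζ + Real.pi) = g n ζ := by
    intro n ζ
    simp only [hgdef, hper]
    rw [mul_add, Complex.exp_add]
    have h1 : Complex.exp (-(2:ℂ) * n * I * Real.pi) = 1 := by
      rw [← Complex.exp_int_mul_two_pi_mul_I (-n)]
      congr 1; push_cast; ring
    rw [h1, mul_one]
  set B : ℤ → ℝ → ℂ := fun n y => ∫ t in (0:ℝ)..Real.pi, g n (t + y * I) with hBdef
  -- vertical shift invariance (Cauchy rectangle theorem)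
  have hvert : ∀ (n : ℤ) (y : ℝ), B n y = B n 0 := by
    intro n y
    have hrect := Complex.integral_boundary_rect_eq_zero_of_differentiableOn (g n) 0
      (Real.pi + y * I) (hgd n).differentiableOn
    simp only [Complex.zero_re, Complex.zero_im, Complex.add_re, Complex.add_im,
      Complex.ofReal_re, Complex.ofReal_im, Complex.mul_re, Complex.mul_im, Complex.I_re,
      Complex.I_im, mul_zero, mul_one, zero_mul, sub_zero, zero_sub, zero_add, add_zero,
      neg_zero] at hrect
    have hside : (∫ s in (0:ℝ)..y, g n (↑Real.pi + ↑s * Complex.I))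
        = ∫ s in (0:ℝ)..y, g n (↑(0:ℝ) + ↑s * Complex.I) := by
      apply intervalIntegral.integral_congr
      intro s _
      show g n (↑Real.pi + ↑s * Complex.I) = g n (↑(0:ℝ) + ↑s * Complex.I)
      rw [show ((Real.pi:ℂ) + ↑s*Complex.I) = (↑(0:ℝ) + ↑s*Complex.I) + Real.pi by
        push_cast; ring, hgper]
    rw [hside] at hrect
    simp only [smul_eq_mul] at hrect
    have h0 : B n 0 - B n y = 0 := by
      simp only [hBdef]
      push_cast at hrect ⊢
      linear_combination hrect
    linear_combination -h0
  -- horizontal shift invariance (periodicity)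
  have hhoriz : ∀ (n : ℤ) (z : ℂ),
      (∫ t in (0:ℝ)..Real.pi, g n (t + z)) = B n z.im := by
    intro n z
    have hGper : Function.Periodic (fun s : ℝ => g n (s + z.im * I)) Real.pi := by
      intro s
      show g n (↑(s + Real.pi) + ↑z.im * I) = _
      rw [show ((s + Real.pi : ℝ) : ℂ) + ↑z.im * I = ((s:ℂ) + ↑z.im * I) + Real.pi by
        push_cast; ring, hgper]
    have h1 : ∀ t : ℝ, g n (t + z) = (fun s : ℝ => g n (s + z.im * I)) (t + z.re) := by
      intro t
      show g n (↑t + z) = g n (↑(t + z.re) + ↑z.im * I)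
      congr 1
      push_cast
      linear_combination -Complex.re_add_im z
    calc (∫ t in (0:ℝ)..Real.pi, g n (t + z))
        = ∫ t in (0:ℝ)..Real.pi, (fun s : ℝ => g n (s + z.im * I)) (t + z.re) := by
          simp_rw [h1]
      _ = ∫ s in (0+z.re)..(Real.pi+z.re), g n (s + z.im * I) := by
          exact intervalIntegral.integral_comp_add_right (fun s : ℝ => g n (↑s + ↑z.im * I)) z.re
      _ = ∫ s in (0:ℝ)..(0+Real.pi), g n (s + z.im * I) := by
          rw [zero_add, show Real.pi + z.re = z.re + Real.pi from add_comm _ _]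
          exact hGper.intervalIntegral_add_eq z.re 0
      _ = B n z.im := by rw [zero_add]
  set a : ℤ → ℂ := fun n => B n 0 with hadef
  have hA : ∀ (n : ℤ) (z : ℂ), (∫ t in (0:ℝ)..Real.pi, g n (t + z)) = a n := fun n z =>
    (hhoriz n z).trans (hvert n z.im)
  -- the recursion from the functional equation
  have hrec : ∀ n : ℤ, a n = Complex.exp ((2*(n:ℂ)+1)*τ) * a (n+1) := by
    intro n
    have h0 : a n = ∫ t in (0:ℝ)..Real.pi, g n (↑t + I*τ) := (hA n (I*τ)).symm
    have hpt : ∀ t : ℝ, g n (↑t + I*τ) = Complex.exp ((2*(n:ℂ)+1)*τ) * g (n+1) ↑t := by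
      intro t
      have hft : f (↑t + I*τ) = Complex.exp (τ - 2*I*↑t) * f ↑t := by
        rw [← heq ↑t]
        rw [show Complex.exp (τ - 2*I*↑t) * (Complex.exp (-τ) * Complex.exp (2*I*↑t) * f (↑t+I*τ))
            = Complex.exp ((τ - 2*I*↑t) + -τ + (2*I*↑t)) * f (↑t+I*τ) by
          rw [Complex.exp_add, Complex.exp_add]; ring]
        rw [show (τ - 2*I*↑t) + -τ + (2*I*↑t) = 0 by ring, Complex.exp_zero, one_mul]
      have key : Complex.exp (τ - 2*I*↑t) * Complex.exp (-(2:ℂ)*(n:ℂ)*I*(↑t + I*τ))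
          = Complex.exp ((2*(n:ℂ)+1)*τ) * Complex.exp (-(2:ℂ)*((n:ℂ)+1)*I*↑t) := by
        rw [← Complex.exp_add, ← Complex.exp_add]
        congr 1
        linear_combination (-2*(n:ℂ)*τ) * Complex.I_sq
      show f (↑t + I*τ) * Complex.exp (-(2:ℂ) * (n:ℂ) * I * (↑t + I*τ))
          = Complex.exp ((2*(n:ℂ)+1)*τ) * (f ↑t * Complex.exp (-(2:ℂ) * ((n+1 : ℤ):ℂ) * I * ↑t))
      calc f (↑t + I*τ) * Complex.exp (-(2:ℂ)*(n:ℂ)*I*(↑t+I*τ))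
          = Complex.exp (τ-2*I*↑t) * Complex.exp (-(2:ℂ)*(n:ℂ)*I*(↑t+I*τ)) * f ↑t := by
            rw [hft]; ring
        _ = Complex.exp ((2*(n:ℂ)+1)*τ) * Complex.exp (-(2:ℂ)*((n:ℂ)+1)*I*↑t) * f ↑t := by
            rw [key]
        _ = Complex.exp ((2*(n:ℂ)+1)*τ) * (f ↑t * Complex.exp (-(2:ℂ)*((n+1:ℤ):ℂ)*I*↑t)) := by
            push_cast; ring
    rw [h0]
    rw [intervalIntegral.integral_congr (g := fun t : ℝ =>
      Complex.exp ((2*(n:ℂ)+1)*τ) * g (n+1) ↑t) (fun t _ => hpt t)]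
    rw [intervalIntegral.integral_const_mul]
    congr 1
    have h2 := hA (n+1) 0
    simpa using h2
  -- solve the recursion
  have hform : ∀ n : ℤ, a n = a 0 * Complex.exp (-(n:ℂ)^2 * τ) := by
    have hrec' : ∀ n : ℤ, a (n+1) = Complex.exp (-((2*(n:ℂ)+1)*τ)) * a n := by
      intro n
      rw [hrec n, ← mul_assoc, ← Complex.exp_add, neg_add_cancel, Complex.exp_zero, one_mul]
    intro n
    induction n using Int.induction_on with
    | zero => simp
    | succ k ih =>
      have h := hrec' (k : ℤ)
      rw [ih] at h
      rw [h, ← mul_assoc, mul_comm (Complex.exp _) (a 0), mul_assoc, ← Complex.exp_add]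
      congr 2
      push_cast
      ring
    | pred k ih =>
      have h := hrec (-(k:ℤ)-1)
      rw [show (-(k:ℤ)-1) + 1 = -(k:ℤ) by ring, ih] at h
      rw [h, ← mul_assoc, mul_comm (Complex.exp _) (a 0), mul_assoc, ← Complex.exp_add]
      congr 2
      push_cast
      ring
  -- the Fourier series step
  refine ⟨a 0 / (Real.pi : ℂ), fun w => ?_⟩
  have hFper : Function.Periodic (fun t : ℝ => f (↑t + ↑w.im * I)) Real.pi := by
    intro t
    show f (↑(t + Real.pi) + ↑w.im * I) = _
    rw [show ((t + Real.pi : ℝ) : ℂ) + ↑w.im * I = ((t:ℂ) + ↑w.im * I) + Real.pi by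
      push_cast; ring, hper]
  have hFcont : Continuous (fun t : ℝ => f (↑t + ↑w.im * I)) :=
    hf.continuous.comp (Complex.continuous_ofReal.add continuous_const)
  set F : C(AddCircle Real.pi, ℂ) :=
    ⟨hFper.lift, continuous_coinduced_dom.mpr hFcont⟩ with hFdef
  -- compute the Fourier coefficients of F
  have hcoeff : ∀ n : ℤ, fourierCoeff (F : AddCircle Real.pi → ℂ) n
      = (a 0 / (Real.pi : ℂ)) * (Complex.exp (-(n:ℂ)^2*τ) * Complex.exp (2*(n:ℂ)*I*(↑w.im*I))) := by
    intro n
    rw [fourierCoeff_eq_intervalIntegral _ n 0]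
    have h1 : ∀ t : ℝ, (fourier (-n) (t : AddCircle Real.pi) : ℂ) • F ↑t
        = Complex.exp (2*(n:ℂ)*I*(↑w.im*I)) * g n (↑t + ↑w.im * I) := by
      intro t
      rw [smul_eq_mul, fourier_coe_apply]
      show Complex.exp (2*↑Real.pi*I*(-n:ℤ)*t/Real.pi) * hFper.lift ↑t = _
      rw [Function.Periodic.lift_coe]
      show Complex.exp (2*↑Real.pi*I*(-n:ℤ)*t/Real.pi) * f (↑t + ↑w.im * I)
        = Complex.exp (2*(n:ℂ)*I*(↑w.im*I)) * (f (↑t + ↑w.im * I)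
            * Complex.exp (-(2:ℂ) * (n:ℂ) * I * (↑t + ↑w.im * I)))
      rw [show Complex.exp (2*(n:ℂ)*I*(↑w.im*I)) * (f (↑t + ↑w.im * I)
            * Complex.exp (-(2:ℂ) * (n:ℂ) * I * (↑t + ↑w.im * I)))
          = Complex.exp (2*(n:ℂ)*I*(↑w.im*I) + -(2:ℂ) * (n:ℂ) * I * (↑t + ↑w.im * I))
            * f (↑t + ↑w.im * I) by rw [Complex.exp_add]; ring]
      congr 2
      push_cast
      field_simp [hπc]
      ring
    rw [intervalIntegral.integral_congr (g := fun t : ℝ =>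
      Complex.exp (2*(n:ℂ)*I*(↑w.im*I)) * g n (↑t + ↑w.im * I)) (fun t _ => h1 t)]
    rw [intervalIntegral.integral_const_mul, zero_add, hA n (↑w.im * I), hform n,
      Complex.real_smul]
    push_cast
    field_simp
  -- summability of the Fourier coefficients
  have hτ' : 0 < (I*τ/(Real.pi:ℂ)).im := by
    rw [Complex.div_ofReal_im]
    simp only [Complex.mul_im, Complex.I_re, Complex.I_im, zero_mul, one_mul, zero_add]
    exact div_pos hτ hπ
  have hsummable : Summable (fourierCoeff (F : AddCircle Real.pi → ℂ)) := by
    have h1 : Summable (fun n : ℤ => (a 0 / (Real.pi:ℂ)) *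
        jacobiTheta₂_term n (↑w.im*I/(Real.pi:ℂ)) (I*τ/(Real.pi:ℂ))) :=
      ((summable_jacobiTheta₂_term_iff _ _).mpr hτ').mul_left _
    apply h1.congr
    intro n
    rw [hcoeff n]
    congr 1
    rw [jacobiTheta₂_term, ← Complex.exp_add]
    congr 1
    field_simp
    linear_combination ((n:ℂ)^2 * τ) * Complex.I_sq
  have hps := has_pointwise_sum_fourier_series_of_summable hsummable
    ((w.re : ℝ) : AddCircle Real.pi)
  have hFx : (F : AddCircle Real.pi → ℂ) ((w.re : ℝ) : AddCircle Real.pi) = f w := by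
    show hFper.lift ((w.re : ℝ) : AddCircle Real.pi) = f w
    rw [Function.Periodic.lift_coe]
    show f (↑w.re + ↑w.im * I) = f w
    rw [Complex.re_add_im]
  have hterm : ∀ n : ℤ, (fourierCoeff (F : AddCircle Real.pi → ℂ) n)
        • (fourier n ((w.re : ℝ) : AddCircle Real.pi) : ℂ)
      = (a 0 / (Real.pi:ℂ)) * (Complex.exp (-(n:ℂ)^2*τ) * Complex.exp (2*(n:ℂ)*I*w)) := by
    intro n
    rw [smul_eq_mul, fourier_coe_apply, hcoeff n]
    have hkey : Complex.exp (2*(n:ℂ)*I*(↑w.im*I)) * Complex.exp (2*↑Real.pi*I*↑n*↑w.re/↑Real.pi)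
        = Complex.exp (2*(n:ℂ)*I*w) := by
      rw [← Complex.exp_add]
      congr 1
      field_simp
      linear_combination ((n:ℂ)) * (Complex.re_add_im w)
    calc (a 0 / (Real.pi:ℂ)) * (Complex.exp (-(n:ℂ)^2*τ) * Complex.exp (2*(n:ℂ)*I*(↑w.im*I)))
          * Complex.exp (2*↑Real.pi*I*↑n*↑w.re/↑Real.pi)
        = (a 0 / (Real.pi:ℂ)) * (Complex.exp (-(n:ℂ)^2*τ)
            * (Complex.exp (2*(n:ℂ)*I*(↑w.im*I)) * Complex.exp (2*↑Real.pi*I*↑n*↑w.re/↑Real.pi)))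
          := by ring
      _ = (a 0 / (Real.pi:ℂ)) * (Complex.exp (-(n:ℂ)^2*τ) * Complex.exp (2*(n:ℂ)*I*w)) := by
          rw [hkey]
  have hps' : HasSum (fun n : ℤ => (a 0 / (Real.pi:ℂ))
      * (Complex.exp (-(n:ℂ)^2*τ) * Complex.exp (2*(n:ℂ)*I*w))) (f w) := by
    rw [← hFx, ← funext hterm]
    exact hps
  rw [← hps'.tsum_eq, tsum_mul_left]
end

section
/- Let τ ∈ ℂ with Re τ > 0, let T be a tempered distribution on ℝ, i.e. a continuous linear functional on the Schwartz space 𝒮(ℝ, ℂ), and let G : ℂ → 𝒮(ℝ, ℂ) be a map such that for every w ∈ ℂ and x ∈ ℝ, (G w)(x) = (1/√(πτ)) e^{−(x−w)²/τ} (such Schwartz functions exist since Re(1/τ) > 0). Then the function ℂ → ℂ, w ↦ T(G w), is entire (complex analytic on all of ℂ). -/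
open Complex SchwartzMap Filter
open scoped Nat


-- basic scalar lemmas
lemma pow_le_factorial_mul_exp (t : ℝ) (ht : 0 ≤ t) (M : ℕ) :
    t ^ M ≤ (M ! : ℝ) * Real.exp t := by
  have h := Real.sum_le_exp_of_nonneg ht (M + 1)
  have h2 : t ^ M / (M ! : ℝ) ≤ Real.exp t := by
    refine le_trans ?_ h
    refine Finset.single_le_sum (f := fun i => t ^ i / (i ! : ℝ)) ?_ (by simp)
    intro i _; positivity
  have hM : (0:ℝ) < (M ! : ℝ) := by exact_mod_cast Nat.factorial_pos M
  calc t ^ M = t ^ M / (M !) * (M !) := by field_simp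
  _ ≤ Real.exp t * M ! := by nlinarith
  _ = (M ! : ℝ) * Real.exp t := by ring

lemma pow_mul_exp_neg_le (a t : ℝ) (ha : 0 < a) (ht : 0 ≤ t) (M : ℕ) :
    t ^ M * Real.exp (-(a * t)) ≤ (M ! : ℝ) / a ^ M := by
  have h := pow_le_factorial_mul_exp (a * t) (by positivity) M
  rw [mul_pow] at h
  have he : Real.exp (-(a*t)) = (Real.exp (a*t))⁻¹ := by rw [Real.exp_neg]
  have hexp : (0:ℝ) < Real.exp (a*t) := Real.exp_pos _
  rw [he]
  rw [div_eq_mul_inv]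
  have : t ^ M = (a ^ M * t ^ M) * (a ^ M)⁻¹ := by field_simp
  calc t ^ M * (Real.exp (a*t))⁻¹ = (a ^ M * t ^ M) * (Real.exp (a*t))⁻¹ * (a^M)⁻¹ := by
        field_simp
  _ ≤ ((M ! : ℝ) * Real.exp (a*t)) * (Real.exp (a*t))⁻¹ * (a^M)⁻¹ := by
        have h1 : (0:ℝ) ≤ (Real.exp (a*t))⁻¹ := by positivity
        have h2 : (0:ℝ) ≤ (a^M)⁻¹ := by positivity
        gcongr
  _ = (M ! : ℝ) * (a ^ M)⁻¹ := by field_simp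

lemma my_sqrt_pow (a : ℝ) (ha : 0 ≤ a) (M : ℕ) : Real.sqrt (a ^ M) = Real.sqrt a ^ M := by
  have h : (Real.sqrt a ^ M) ^ 2 = a ^ M := by
    rw [← pow_mul, mul_comm M 2, pow_mul, Real.sq_sqrt ha]
  rw [← h, Real.sqrt_sq (by positivity)]

lemma gauss_sup (c : ℝ) (hc : 0 < c) (M : ℕ) (x : ℝ) :
    |x| ^ M * Real.exp (-(c * x ^ 2)) ≤ Real.sqrt (M !) * (Real.sqrt (2 * c))⁻¹ ^ M := by
  have h0 : (0:ℝ) ≤ |x| ^ M * Real.exp (-(c * x ^ 2)) := by positivity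
  have hsq : (|x| ^ M * Real.exp (-(c * x ^ 2))) ^ 2 ≤ (M ! : ℝ) / (2*c) ^ M := by
    have := pow_mul_exp_neg_le (2*c) (x^2) (by positivity) (by positivity) M
    calc (|x| ^ M * Real.exp (-(c * x ^ 2))) ^ 2
        = (x ^ 2) ^ M * Real.exp (-(2 * c * x ^ 2)) := by
          rw [mul_pow, ← Real.exp_nat_mul, ← pow_mul, mul_comm M 2, pow_mul, _root_.sq_abs]
          push_cast
          ring_nf
    _ ≤ (M ! : ℝ) / (2*c) ^ M := by
          convert this using 2
  calc |x| ^ M * Real.exp (-(c * x ^ 2))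
      = Real.sqrt ((|x| ^ M * Real.exp (-(c * x ^ 2))) ^ 2) := by
        rw [Real.sqrt_sq h0]
  _ ≤ Real.sqrt ((M ! : ℝ) / (2*c) ^ M) := Real.sqrt_le_sqrt hsq
  _ = Real.sqrt (M !) * (Real.sqrt (2*c))⁻¹ ^ M := by
        rw [Real.sqrt_div' _ (by positivity), div_eq_mul_inv,
          my_sqrt_pow _ (by positivity), inv_pow]

lemma temper_bound (K : ℕ) (R β : ℝ) (hβ : 0 < β) :
    ∃ D : ℝ, 0 ≤ D ∧ ∀ x : ℝ,
      (1 + |x|) ^ K * Real.exp (R * |x|) * Real.exp (-(β * x ^ 2)) ≤ D := by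
  refine ⟨2 ^ K * (1 + Real.sqrt (K !) * (Real.sqrt (2 * (β/2)))⁻¹ ^ K) *
    Real.exp (R ^ 2 / (2 * β)), by positivity, fun x => ?_⟩
  have hx : (0:ℝ) ≤ |x| := abs_nonneg x
  have hexp : Real.exp (R * |x|) * Real.exp (-(β * x ^ 2)) ≤
      Real.exp (R ^ 2 / (2 * β)) * Real.exp (-(β/2 * x ^ 2)) := by
    rw [← Real.exp_add, ← Real.exp_add]
    apply Real.exp_le_exp.2
    have h2β : (0:ℝ) < 2 * β := by linarith
    have key : R * |x| - β / 2 * x ^ 2 ≤ R ^ 2 / (2 * β) := by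
      rw [le_div_iff₀ h2β, ← _root_.sq_abs x]
      nlinarith [sq_nonneg (R - β * |x|)]
    linarith
  have hpoly : (1 + |x|) ^ K * Real.exp (-(β/2 * x ^ 2)) ≤
      2 ^ K * (1 + Real.sqrt (K !) * (Real.sqrt (2 * (β/2)))⁻¹ ^ K) := by
    have h1 : (1 + |x|) ^ K ≤ 2 ^ K * (1 + |x| ^ K) := by
      rcases le_total |x| 1 with h | h
      · calc (1 + |x|) ^ K ≤ 2 ^ K := by
              apply pow_le_pow_left₀ (by positivity); linarith
        _ ≤ 2 ^ K * (1 + |x| ^ K) := by nlinarith [pow_nonneg hx K, pow_pos (show (0:ℝ)<2 by norm_num) K]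
      · calc (1 + |x|) ^ K ≤ (2 * |x|) ^ K := by
              apply pow_le_pow_left₀ (by positivity); linarith
        _ = 2 ^ K * |x| ^ K := by rw [mul_pow]
        _ ≤ 2 ^ K * (1 + |x| ^ K) := by nlinarith [pow_pos (show (0:ℝ)<2 by norm_num) K]
    have h2 : Real.exp (-(β/2 * x ^ 2)) ≤ 1 := Real.exp_le_one_iff.2 (by nlinarith [sq_nonneg x])
    have h3 := gauss_sup (β/2) (by positivity) K x
    calc (1 + |x|) ^ K * Real.exp (-(β/2 * x ^ 2))
        ≤ 2 ^ K * (1 + |x| ^ K) * Real.exp (-(β/2 * x ^ 2)) := by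
          have := Real.exp_pos (-(β/2 * x ^ 2)); gcongr
    _ = 2 ^ K * (Real.exp (-(β/2 * x ^ 2)) + |x| ^ K * Real.exp (-(β/2 * x ^ 2))) := by ring
    _ ≤ 2 ^ K * (1 + Real.sqrt (K !) * (Real.sqrt (2 * (β/2)))⁻¹ ^ K) := by gcongr
  calc (1 + |x|) ^ K * Real.exp (R * |x|) * Real.exp (-(β * x ^ 2))
      = (1 + |x|) ^ K * (Real.exp (R * |x|) * Real.exp (-(β * x ^ 2))) := by ring
  _ ≤ (1 + |x|) ^ K * (Real.exp (R ^ 2 / (2 * β)) * Real.exp (-(β/2 * x ^ 2))) := by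
      have : (0:ℝ) ≤ (1+|x|)^K := by positivity
      gcongr
  _ = ((1 + |x|) ^ K * Real.exp (-(β/2 * x ^ 2))) * Real.exp (R ^ 2 / (2 * β)) := by ring
  _ ≤ 2 ^ K * (1 + Real.sqrt (K !) * (Real.sqrt (2 * (β/2)))⁻¹ ^ K) * Real.exp (R ^ 2 / (2 * β)) := by
      have := Real.exp_pos (R ^ 2 / (2 * β)); gcongr

lemma tendsto_pow_div_sqrt_factorial (a : ℝ) :
    Tendsto (fun M : ℕ => a ^ M / Real.sqrt (M !)) atTop (nhds 0) := by
  have h1 : Tendsto (fun M : ℕ => (a ^ 2) ^ M / (M ! : ℝ)) atTop (nhds 0) :=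
    FloorSemiring.tendsto_pow_div_factorial_atTop (a ^ 2)
  have h2 : Tendsto (fun M : ℕ => Real.sqrt ((a ^ 2) ^ M / (M ! : ℝ))) atTop (nhds 0) :=
    (Real.continuous_sqrt.tendsto' 0 0 (by simp)).comp h1
  apply squeeze_zero_norm _ h2
  intro M
  have hfact : (0:ℝ) < (M ! : ℝ) := by exact_mod_cast Nat.factorial_pos M
  have : Real.sqrt ((a ^ 2) ^ M / (M ! : ℝ)) = |a ^ M| / Real.sqrt (M !) := by
    rw [← pow_mul, mul_comm 2 M, pow_mul, Real.sqrt_div (by positivity), Real.sqrt_sq_eq_abs]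
  rw [this, Real.norm_eq_abs, abs_div, _root_.abs_of_nonneg (Real.sqrt_nonneg _)]


noncomputable def eTail (z : ℂ) (M : ℕ) : ℝ → ℂ :=
  fun x => Complex.exp (z * x) - ∑ n ∈ Finset.range M, (z * x) ^ n / n !

lemma eTail_norm_le (z : ℂ) (M : ℕ) (x : ℝ) :
    ‖eTail z M x‖ ≤ ‖z * x‖ ^ M / M ! * Real.exp ‖z * (x:ℂ)‖ := by
  set y : ℂ := z * x
  have hsum : Summable fun n : ℕ => y ^ n / (n ! : ℂ) := NormedSpace.expSeries_div_summable y
  have hexp : Complex.exp y = ∑' n : ℕ, y ^ n / n ! := by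
    rw [Complex.exp_eq_exp_ℂ, NormedSpace.exp_eq_tsum_div]
  have htail : eTail z M x = ∑' n : ℕ, y ^ (n + M) / (n + M)! := by
    have := Summable.sum_add_tsum_nat_add M hsum
    simp only [eTail]
    rw [hexp, ← this]
    ring
  rw [htail]
  have hnorm : ∀ n : ℕ, ‖y ^ (n + M) / ((n + M)! : ℂ)‖ ≤ ‖y‖ ^ M / M ! * (‖y‖ ^ n / n !) := by
    intro n
    rw [norm_div, norm_pow]
    have h1 : ((M ! : ℝ) * n !) ≤ ((n + M)! : ℝ) := by
      exact_mod_cast Nat.le_of_dvd (Nat.factorial_pos _)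
        (by simpa [mul_comm, Nat.add_comm] using Nat.factorial_mul_factorial_dvd_factorial_add n M)
    have h2 : ‖((n + M)! : ℂ)‖ = ((n + M)! : ℝ) := by
      simp [Complex.norm_natCast]
    rw [h2, pow_add]
    rw [div_le_iff₀ (by positivity)]
    have hM : (0:ℝ) < M ! := by exact_mod_cast Nat.factorial_pos M
    have hn : (0:ℝ) < n ! := by exact_mod_cast Nat.factorial_pos n
    calc ‖y‖ ^ n * ‖y‖ ^ M = (‖y‖ ^ M / M ! * (‖y‖ ^ n / n !)) * (M ! * n !) := by field_simp
    _ ≤ (‖y‖ ^ M / M ! * (‖y‖ ^ n / n !)) * ((n + M)! : ℝ) := by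
        have : (0:ℝ) ≤ ‖y‖ ^ M / M ! * (‖y‖ ^ n / n !) := by positivity
        gcongr
  have hsum2 : Summable fun n : ℕ => ‖y ^ (n + M) / ((n + M)! : ℂ)‖ :=
    ((NormedSpace.norm_expSeries_div_summable y).comp_injective (add_left_injective M))
  have hsum3 : Summable fun n : ℕ => ‖y‖ ^ M / M ! * (‖y‖ ^ n / n !) :=
    (NormedSpace.expSeries_div_summable ‖y‖).mul_left _
  calc ‖∑' n : ℕ, y ^ (n + M) / ((n + M)! : ℂ)‖ ≤ ∑' n : ℕ, ‖y ^ (n + M) / ((n + M)! : ℂ)‖ :=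
        norm_tsum_le_tsum_norm hsum2
  _ ≤ ∑' n : ℕ, ‖y‖ ^ M / M ! * (‖y‖ ^ n / n !) := Summable.tsum_le_tsum hnorm hsum2 hsum3
  _ = ‖y‖ ^ M / M ! * ∑' n : ℕ, ‖y‖ ^ n / n ! := by rw [tsum_mul_left]
  _ = ‖y‖ ^ M / M ! * Real.exp ‖y‖ := by
      rw [Real.exp_eq_exp_ℝ, NormedSpace.exp_eq_tsum_div]

lemma hasDerivAt_eTail (z : ℂ) (M : ℕ) (x : ℝ) :
    HasDerivAt (eTail z (M + 1)) (z * eTail z M x) x := by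
  have hexp : HasDerivAt (fun t : ℝ => Complex.exp (z * t)) (z * Complex.exp (z * x)) x := by
    have h1 : HasDerivAt (fun y : ℂ => Complex.exp (z * y)) (Complex.exp (z * x) * (z * 1)) x :=
      ((hasDerivAt_id (x:ℂ)).const_mul z).cexp
    simpa [mul_comm] using h1.comp_ofReal
  have hsum : HasDerivAt (fun t : ℝ => ∑ n ∈ Finset.range (M + 1), (z * t) ^ n / n !)
      (z * ∑ n ∈ Finset.range M, (z * x) ^ n / n !) x := by
    have hterm : ∀ n : ℕ, HasDerivAt (fun t : ℝ => (z * t) ^ n / (n ! : ℂ))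
        ((n : ℂ) * (z * x) ^ (n - 1) * (z * 1) / n !) x := by
      intro n
      have h1 : HasDerivAt (fun y : ℂ => (z * y) ^ n / (n ! : ℂ))
          ((n : ℂ) * (z * (x:ℂ)) ^ (n - 1) * (z * 1) / n !) (x : ℂ) :=
        (((hasDerivAt_id (x:ℂ)).const_mul z).pow n).div_const _
      exact h1.comp_ofReal
    have hs := HasDerivAt.fun_sum (u := Finset.range (M+1)) (fun n _ => hterm n)
    convert hs using 1
    · rfl
    rw [Finset.sum_range_succ', Finset.mul_sum]
    simp only [Nat.cast_zero, zero_mul, zero_div, add_zero, Nat.factorial_zero, Nat.cast_one]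
    apply Finset.sum_congr rfl
    intro j _
    rw [Nat.add_sub_cancel]
    have hfac : ((j + 1)! : ℂ) = ((j + 1) : ℂ) * (j ! : ℂ) := by
      push_cast [Nat.factorial_succ]; ring
    have hj1 : ((j:ℂ) + 1) ≠ 0 := Nat.cast_add_one_ne_zero j
    have hjf : ((j ! : ℂ)) ≠ 0 := Nat.cast_ne_zero.2 (Nat.factorial_ne_zero j)
    push_cast
    rw [hfac]
    field_simp
  have := hexp.sub hsum
  convert this using 1
  · rfl
  · rfl
  simp only [eTail]
  ring

lemma contDiff_eTail (z : ℂ) (M : ℕ) : ContDiff ℝ ⊤ (eTail z M) := by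
  unfold eTail
  have hzx : ContDiff ℝ ⊤ (fun t : ℝ => z * (t : ℂ)) :=
    (Complex.ofRealCLM.contDiff).const_smul z
  apply ContDiff.sub
  · exact Complex.contDiff_exp.comp hzx
  · apply ContDiff.sum
    intro n _
    exact (hzx.pow n).div_const _

lemma iteratedDeriv_eTail (z : ℂ) (i M : ℕ) (h : i ≤ M) :
    iteratedDeriv i (eTail z M) = fun x => z ^ i * eTail z (M - i) x := by
  induction i with
  | zero => simp [iteratedDeriv_zero]
  | succ i ih =>
    have hi : i ≤ M := Nat.le_of_succ_le h
    rw [iteratedDeriv_succ, ih hi]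
    funext x
    have hMi : M - i = (M - (i + 1)) + 1 := by omega
    have hd : HasDerivAt (fun x : ℝ => z ^ i * eTail z (M - i) x)
        (z ^ i * (z * eTail z (M - (i + 1)) x)) x := by
      rw [hMi]
      exact (hasDerivAt_eTail z _ x).const_mul _
    rw [hd.deriv]
    ring

lemma poly_eval_bound (p : Polynomial ℂ) :
    ∃ C : ℝ, 0 ≤ C ∧ ∀ x : ℝ, ‖p.eval (x:ℂ)‖ ≤ C * (1 + |x|) ^ p.natDegree := by
  refine ⟨∑ i ∈ Finset.range (p.natDegree + 1), ‖p.coeff i‖, by positivity, fun x => ?_⟩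
  rw [Polynomial.eval_eq_sum_range]
  calc ‖∑ i ∈ Finset.range (p.natDegree + 1), p.coeff i * (x:ℂ) ^ i‖
      ≤ ∑ i ∈ Finset.range (p.natDegree + 1), ‖p.coeff i * (x:ℂ) ^ i‖ := norm_sum_le _ _
  _ ≤ ∑ i ∈ Finset.range (p.natDegree + 1), ‖p.coeff i‖ * (1 + |x|) ^ p.natDegree := by
      apply Finset.sum_le_sum
      intro i hi
      rw [norm_mul, norm_pow]
      have hx : ‖(x:ℂ)‖ = |x| := by simp [Complex.norm_real]
      rw [hx]
      have h1 : |x| ^ i ≤ (1 + |x|) ^ i := by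
        apply pow_le_pow_left₀ (abs_nonneg x); linarith [abs_nonneg x]
      have h2 : (1 + |x|) ^ i ≤ (1 + |x|) ^ p.natDegree := by
        apply pow_le_pow_right₀ (by linarith [abs_nonneg x])
        exact Nat.lt_succ_iff.mp (Finset.mem_range.mp hi)
      have := norm_nonneg (p.coeff i)
      calc ‖p.coeff i‖ * |x| ^ i ≤ ‖p.coeff i‖ * (1 + |x|) ^ p.natDegree := by
            apply mul_le_mul_of_nonneg_left (le_trans h1 h2) this
      _ = _ := rfl
  _ = (∑ i ∈ Finset.range (p.natDegree + 1), ‖p.coeff i‖) * (1 + |x|) ^ p.natDegree := by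
      rw [Finset.sum_mul]

noncomputable def gaussFun (c τ : ℂ) : ℝ → ℂ := fun x => c * Complex.exp (-(x:ℂ) ^ 2 / τ)

lemma contDiff_gaussFun (c τ : ℂ) : ContDiff ℝ ⊤ (gaussFun c τ) := by
  unfold gaussFun
  apply ContDiff.const_smul c
  apply Complex.contDiff_exp.comp
  exact (((Complex.ofRealCLM.contDiff).pow 2).neg).div_const τ

lemma iteratedDeriv_gaussFun (c τ : ℂ) (j : ℕ) :
    ∃ p : Polynomial ℂ, iteratedDeriv j (gaussFun c τ) =
      fun x : ℝ => p.eval (x:ℂ) * Complex.exp (-(x:ℂ) ^ 2 / τ) := by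
  induction j with
  | zero =>
    exact ⟨Polynomial.C c, by funext x; simp [gaussFun, iteratedDeriv_zero]⟩
  | succ j ih =>
    obtain ⟨p, hp⟩ := ih
    refine ⟨p.derivative + p * (Polynomial.C (-2 / τ) * Polynomial.X), ?_⟩
    rw [iteratedDeriv_succ, hp]
    funext x
    have hd : HasDerivAt (fun y : ℂ => p.eval y * Complex.exp (-y ^ 2 / τ))
        (p.derivative.eval (x:ℂ) * Complex.exp (-(x:ℂ) ^ 2 / τ)
          + p.eval (x:ℂ) * (Complex.exp (-(x:ℂ) ^ 2 / τ) * (-2 * (x:ℂ) / τ))) (x : ℂ) := by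
      have h1 : HasDerivAt (fun y : ℂ => p.eval y) (p.derivative.eval (x:ℂ)) (x:ℂ) :=
        p.hasDerivAt (x:ℂ)
      have h2 : HasDerivAt (fun y : ℂ => -y ^ 2 / τ) (-2 * (x:ℂ) / τ) (x:ℂ) := by
        have := (((hasDerivAt_id (x:ℂ)).pow 2).neg).div_const τ
        simpa [mul_comm] using this
      have h3 := h2.cexp
      simpa using h1.fun_mul h3
    have hdr := hd.comp_ofReal
    rw [hdr.deriv]
    simp only [Polynomial.eval_add, Polynomial.eval_mul, Polynomial.eval_C, Polynomial.eval_X]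
    ring

lemma norm_cexp_neg_sq_div (τ : ℂ) (x : ℝ) :
    ‖Complex.exp (-(x:ℂ) ^ 2 / τ)‖ = Real.exp (-(τ⁻¹.re * x ^ 2)) := by
  rw [Complex.norm_exp]
  congr 1
  have : -(x:ℂ) ^ 2 / τ = ((-(x^2) : ℝ) : ℂ) * τ⁻¹ := by
    push_cast; ring
  rw [this, Complex.re_ofReal_mul]
  ring

lemma gaussFun_deriv_bound (c τ : ℂ) (j : ℕ) :
    ∃ (C : ℝ) (d : ℕ), 0 ≤ C ∧ ∀ x : ℝ, ‖iteratedDeriv j (gaussFun c τ) x‖ ≤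
      C * (1 + |x|) ^ d * Real.exp (-(τ⁻¹.re * x ^ 2)) := by
  obtain ⟨p, hp⟩ := iteratedDeriv_gaussFun c τ j
  obtain ⟨C, hC0, hC⟩ := poly_eval_bound p
  refine ⟨C, p.natDegree, hC0, fun x => ?_⟩
  rw [hp]
  rw [norm_mul, norm_cexp_neg_sq_div]
  have := Real.exp_pos (-(τ⁻¹.re * x ^ 2))
  gcongr
  exact hC x

lemma schwartz_series_tendsto (c τ : ℂ) (hα : 0 < τ⁻¹.re) (z : ℂ)
    (g h : SchwartzMap ℝ ℂ) (hg : ⇑g = gaussFun c τ)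
    (hh : ⇑h = fun x : ℝ => Complex.exp (z * x) * gaussFun c τ x)
    (fn : ℕ → SchwartzMap ℝ ℂ) (hfn : ∀ n x, fn n x = (x:ℂ) ^ n * g x) :
    Tendsto (fun N => ∑ n ∈ Finset.range N, (z ^ n / n !) • fn n) atTop (nhds h) := by
  set α : ℝ := τ⁻¹.re
  rw [(schwartz_withSeminorms ℝ ℝ ℂ).tendsto_nhds _ h]
  rintro ⟨k, m⟩ ε hε
  -- constants
  choose C d hC0 hCb using fun i : ℕ => gaussFun_deriv_bound c τ i
  have hα2 : 0 < α / 2 := by linarith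
  choose D hD0 hDb using fun i : ℕ =>
    temper_bound (k + d (m - i)) ‖z‖ (α / 2) hα2
  set b : ℕ → ℝ := fun M => (‖z‖ * (Real.sqrt α)⁻¹) ^ M / Real.sqrt (M !) with hbdef
  set K : ℕ → ℝ := fun i => (m.choose i : ℝ) * ‖z‖ ^ i * C (m - i) * D i with hKdef
  have hK0 : ∀ i, 0 ≤ K i := fun i => by
    have := hC0 (m - i); have := hD0 i; positivity
  set B : ℕ → ℝ := fun N => ∑ i ∈ Finset.range (m + 1), K i * b (N - i) with hBdef
  -- the function identity
  have hfun : ∀ N : ℕ, ⇑((∑ n ∈ Finset.range N, (z ^ n / n !) • fn n) - h) =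
      fun x : ℝ => -(eTail z N x * gaussFun c τ x) := by
    intro N
    funext x
    have hsum : ((∑ n ∈ Finset.range N, (z ^ n / n !) • fn n) : SchwartzMap ℝ ℂ) x =
        ∑ n ∈ Finset.range N, (z ^ n / n !) * fn n x := by
      have := map_sum (FunLike.coeAddMonoidHom (SchwartzMap ℝ ℂ) ℝ ℂ) (fun n => (z ^ n / n !) • fn n) (Finset.range N)
      have h2 : ⇑(∑ n ∈ Finset.range N, (z ^ n / n !) • fn n) =
          ∑ n ∈ Finset.range N, ⇑((z ^ n / n !) • fn n) := this
      rw [h2, Finset.sum_apply]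
      simp [SchwartzMap.smul_apply, smul_eq_mul]
    simp only [SchwartzMap.sub_apply, hsum, hh]
    have : ∀ n, (z ^ n / (n ! : ℂ)) * fn n x = (z * x) ^ n / n ! * gaussFun c τ x := by
      intro n
      rw [hfn n x, ← hg]
      rw [mul_pow]
      ring
    rw [Finset.sum_congr rfl (fun n _ => this n), ← Finset.sum_mul]
    simp only [eTail]
    ring
  -- seminorm bound
  have hbound : ∀ N : ℕ, m ≤ N →
      SchwartzMap.seminorm ℝ k m ((∑ n ∈ Finset.range N, (z ^ n / n !) • fn n) - h) ≤ B N := by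
    intro N hmN
    have hB0 : 0 ≤ B N := by
      apply Finset.sum_nonneg
      intro i _
      have : 0 ≤ b (N - i) := by positivity
      exact mul_nonneg (hK0 i) this
    apply SchwartzMap.seminorm_le_bound ℝ k m _ hB0
    intro x
    rw [hfun N]
    rw [show (fun x : ℝ => -(eTail z N x * gaussFun c τ x)) =
      -(fun x : ℝ => eTail z N x * gaussFun c τ x) from rfl, iteratedFDeriv_neg_apply, norm_neg]
    have hmul := norm_iteratedFDeriv_mul_le (𝕜 := ℝ) (A := ℂ)
      ((contDiff_eTail z N).of_le le_top) ((contDiff_gaussFun c τ).of_le le_top) x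
      (le_top (a := (m : WithTop ℕ∞)))
    have hterm : ∀ i ∈ Finset.range (m + 1), ‖x‖ ^ k * ((m.choose i : ℝ) *
        ‖iteratedFDeriv ℝ i (eTail z N) x‖ * ‖iteratedFDeriv ℝ (m - i) (gaussFun c τ) x‖) ≤
        K i * b (N - i) := by
      intro i hi
      have hiN : i ≤ N := le_trans (Nat.lt_succ_iff.mp (Finset.mem_range.mp hi)) hmN
      have hE : ‖iteratedFDeriv ℝ i (eTail z N) x‖ ≤
          ‖z‖ ^ i * ((‖z‖ * |x|) ^ (N - i) / (N - i)! * Real.exp (‖z‖ * |x|)) := by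
        rw [norm_iteratedFDeriv_eq_norm_iteratedDeriv, iteratedDeriv_eTail z i N hiN]
        rw [norm_mul, norm_pow]
        have hzx : ‖z * (x:ℂ)‖ = ‖z‖ * |x| := by
          rw [norm_mul]; simp [Complex.norm_real]
        have := eTail_norm_le z (N - i) x
        rw [hzx] at this
        gcongr
      have hG : ‖iteratedFDeriv ℝ (m - i) (gaussFun c τ) x‖ ≤
          C (m - i) * (1 + |x|) ^ (d (m - i)) * Real.exp (-(α * x ^ 2)) := by
        rw [norm_iteratedFDeriv_eq_norm_iteratedDeriv]
        exact hCb (m - i) x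
      have hxk : ‖x‖ ^ k = |x| ^ k := by rw [Real.norm_eq_abs]
      have hsplit : Real.exp (-(α * x ^ 2)) =
          Real.exp (-(α/2 * x ^ 2)) * Real.exp (-(α/2 * x ^ 2)) := by
        rw [← Real.exp_add]; ring_nf
      have h1 : |x| ^ (N - i) * Real.exp (-(α/2 * x ^ 2)) ≤
          Real.sqrt ((N - i)!) * (Real.sqrt α)⁻¹ ^ (N - i) := by
        have hgs := gauss_sup (α/2) hα2 (N - i) x
        have hs : 2 * (α/2) = α := by ring
        rwa [hs] at hgs
      have h2 : |x| ^ k * (1 + |x|) ^ (d (m - i)) * Real.exp (‖z‖ * |x|) *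
          Real.exp (-(α/2 * x ^ 2)) ≤ D i := by
        have hb2 := hDb i x
        have hxle : |x| ^ k * (1 + |x|) ^ (d (m - i)) ≤ (1 + |x|) ^ (k + d (m - i)) := by
          rw [pow_add]
          gcongr <;> linarith [abs_nonneg x]
        calc |x| ^ k * (1 + |x|) ^ (d (m - i)) * Real.exp (‖z‖ * |x|) *
              Real.exp (-(α/2 * x ^ 2))
            ≤ (1 + |x|) ^ (k + d (m - i)) * Real.exp (‖z‖ * |x|) *
              Real.exp (-(α/2 * x ^ 2)) := by gcongr
        _ ≤ D i := hb2
      have hfacpos : (0:ℝ) < ((N - i)! : ℝ) := by exact_mod_cast Nat.factorial_pos (N - i)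
      have hbval : ‖z‖ ^ (N - i) * (Real.sqrt ((N - i)!) * (Real.sqrt α)⁻¹ ^ (N - i)) / (N - i)! =
          b (N - i) := by
        have hsq : Real.sqrt ((N - i)!) * Real.sqrt ((N - i)!) = ((N - i)! : ℝ) :=
          Real.mul_self_sqrt (by positivity)
        have hsqpos : 0 < Real.sqrt ((N - i)!) := Real.sqrt_pos.2 hfacpos
        show _ = (‖z‖ * (Real.sqrt α)⁻¹) ^ (N - i) / Real.sqrt ((N - i)! : ℝ)
        rw [mul_pow, div_eq_div_iff hfacpos.ne' hsqpos.ne']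
        linear_combination (‖z‖ ^ (N - i) * ((Real.sqrt α)⁻¹) ^ (N - i)) * hsq
      calc ‖x‖ ^ k * ((m.choose i : ℝ) * ‖iteratedFDeriv ℝ i (eTail z N) x‖ *
            ‖iteratedFDeriv ℝ (m - i) (gaussFun c τ) x‖)
          ≤ ‖x‖ ^ k * ((m.choose i : ℝ) *
              (‖z‖ ^ i * ((‖z‖ * |x|) ^ (N - i) / (N - i)! * Real.exp (‖z‖ * |x|))) *
              (C (m - i) * (1 + |x|) ^ (d (m - i)) * Real.exp (-(α * x ^ 2)))) := by
            apply mul_le_mul_of_nonneg_left _ (by positivity : (0:ℝ) ≤ ‖x‖ ^ k)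
            apply mul_le_mul (mul_le_mul_of_nonneg_left hE (by positivity)) hG
              (norm_nonneg _) (by positivity)
      _ = ((m.choose i : ℝ) * ‖z‖ ^ i * C (m - i)) * (‖z‖ ^ (N - i) / (N - i)!) *
              ((|x| ^ (N - i) * Real.exp (-(α/2 * x ^ 2))) *
               (|x| ^ k * (1 + |x|) ^ (d (m - i)) * Real.exp (‖z‖ * |x|) *
                Real.exp (-(α/2 * x ^ 2)))) := by
            rw [hxk, hsplit, mul_pow]
            ring
      _ ≤ ((m.choose i : ℝ) * ‖z‖ ^ i * C (m - i)) * (‖z‖ ^ (N - i) / (N - i)!) *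
              ((Real.sqrt ((N - i)!) * (Real.sqrt α)⁻¹ ^ (N - i)) * D i) := by
            have hC' := hC0 (m - i)
            have hnn : 0 ≤ ((m.choose i : ℝ) * ‖z‖ ^ i * C (m - i)) *
                (‖z‖ ^ (N - i) / (N - i)!) := by positivity
            apply mul_le_mul_of_nonneg_left _ hnn
            apply mul_le_mul h1 h2 (by positivity) (by positivity)
      _ = K i * b (N - i) := by
            rw [hKdef, ← hbval]
            field_simp
    calc ‖x‖ ^ k * ‖iteratedFDeriv ℝ m (fun y => eTail z N y * gaussFun c τ y) x‖
        ≤ ‖x‖ ^ k * ∑ i ∈ Finset.range (m + 1), (m.choose i : ℝ) *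
            ‖iteratedFDeriv ℝ i (eTail z N) x‖ * ‖iteratedFDeriv ℝ (m - i) (gaussFun c τ) x‖ := by
          gcongr
    _ = ∑ i ∈ Finset.range (m + 1), ‖x‖ ^ k * ((m.choose i : ℝ) *
            ‖iteratedFDeriv ℝ i (eTail z N) x‖ * ‖iteratedFDeriv ℝ (m - i) (gaussFun c τ) x‖) := by
          rw [Finset.mul_sum]
    _ ≤ ∑ i ∈ Finset.range (m + 1), K i * b (N - i) := Finset.sum_le_sum hterm
  -- convergence of the bound
  have hBtend : Tendsto B atTop (nhds 0) := by
    rw [hBdef]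
    have : (0:ℝ) = ∑ i ∈ Finset.range (m + 1), (0:ℝ) := by simp
    rw [this]
    apply tendsto_finset_sum
    intro i _
    have hb0 : Tendsto (fun M : ℕ => b M) atTop (nhds 0) :=
      tendsto_pow_div_sqrt_factorial _
    have := (hb0.comp (tendsto_sub_atTop_nat i)).const_mul (K i)
    simpa using this
  have hseq : Tendsto (fun N : ℕ => SchwartzMap.seminorm ℝ k m
      ((∑ n ∈ Finset.range N, (z ^ n / n !) • fn n) - h)) atTop (nhds 0) := by
    apply squeeze_zero' (Filter.Eventually.of_forall fun N => apply_nonneg _ _) ?_ hBtend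
    filter_upwards [eventually_ge_atTop m] with N hN using hbound N hN
  have hlt := Filter.Tendsto.eventually_lt_const hε hseq
  simpa [schwartzSeminormFamily] using hlt

/-- For `Re τ > 0`, pairing a tempered distribution `T` on `ℝ` with the Gaussian
family `w ↦ (1/√(πτ)) e^{−(x−w)²/τ}` (the `τ`-expression of `δ_*(x−w)`, a Schwartz
function of `x` for each fixed `w ∈ ℂ`) yields an entire function of `w`. -/
theorem tempered_pairing_entire (τ : ℂ) (hτ : 0 < τ.re)
    (T : SchwartzMap ℝ ℂ →L[ℂ] ℂ) (G : ℂ → SchwartzMap ℝ ℂ)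
    (hG : ∀ (w : ℂ) (x : ℝ), G w x =
      (1 / ((Real.pi : ℂ) * τ) ^ (1 / 2 : ℂ)) * Complex.exp (-((x : ℂ) - w) ^ 2 / τ)) :
    Differentiable ℂ fun w : ℂ => T (G w) := by
  have hτ0 : τ ≠ 0 := fun h => by simp [h] at hτ
  set c : ℂ := 1 / ((Real.pi : ℂ) * τ) ^ (1 / 2 : ℂ) with hc
  have hα : 0 < τ⁻¹.re := by
    rw [Complex.inv_re]
    exact div_pos hτ (Complex.normSq_pos.2 hτ0)
  set g : SchwartzMap ℝ ℂ := G 0 with hgdef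
  have hg : ⇑g = gaussFun c τ := by
    funext x
    rw [hgdef]
    simp only [gaussFun]
    rw [hG 0 x]
    simp
  -- multiplication CLM
  set P : SchwartzMap ℝ ℂ →L[ℝ] SchwartzMap ℝ ℂ :=
    SchwartzMap.bilinLeftCLM (ContinuousLinearMap.mul ℝ ℂ)
      Complex.ofRealCLM.hasTemperateGrowth with hPdef
  have hP : ∀ (f : SchwartzMap ℝ ℂ) (x : ℝ), (P f) x = f x * (x : ℂ) := fun f x => rfl
  set fn : ℕ → SchwartzMap ℝ ℂ := fun n => (P ^ n) g with hfndef
  have hfn : ∀ n x, fn n x = (x : ℂ) ^ n * g x := by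
    intro n
    induction n with
    | zero => intro x; simp [hfndef]
    | succ n ih =>
      intro x
      have hstep : fn (n + 1) = P (fn n) := by
        rw [hfndef]
        show (P ^ (n + 1)) g = P ((P ^ n) g)
        rw [pow_succ']
        rfl
      rw [hstep, hP, ih]
      ring
  -- the power series
  set p : FormalMultilinearSeries ℂ ℂ ℂ :=
    fun n => ContinuousMultilinearMap.mkPiRing ℂ (Fin n) (T (fn n) / n !) with hpdef
  have hpapply : ∀ (n : ℕ) (z : ℂ), (p n fun _ => z) = z ^ n / n ! * T (fn n) := by
    intro n z
    rw [hpdef]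
    simp [ContinuousMultilinearMap.mkPiRing_apply, smul_eq_mul]
    ring
  -- convergence of partial sums to T (hmap w)
  have htendT : ∀ w : ℂ, Tendsto (fun N => ∑ n ∈ Finset.range N, (p n fun _ => 2 * w / τ))
      atTop (nhds (T (Complex.exp (w ^ 2 / τ) • G w))) := by
    intro w
    have hh : ⇑(Complex.exp (w ^ 2 / τ) • G w) =
        fun x : ℝ => Complex.exp ((2 * w / τ) * x) * gaussFun c τ x := by
      funext x
      rw [SchwartzMap.smul_apply, hG w x, smul_eq_mul]
      simp only [gaussFun]
      rw [show -((x:ℂ) - w) ^ 2 / τ = ((2 * w / τ) * x + -(x:ℂ) ^ 2 / τ) + -(w ^ 2 / τ) from by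
        field_simp; ring]
      rw [Complex.exp_add, Complex.exp_add, Complex.exp_neg]
      field_simp [Complex.exp_ne_zero]
    have htend := schwartz_series_tendsto c τ hα (2 * w / τ) g _ hg hh fn hfn
    have hcont := (T.continuous.tendsto (Complex.exp (w ^ 2 / τ) • G w)).comp htend
    have heq : ∀ N, T (∑ n ∈ Finset.range N, ((2 * w / τ) ^ n / n !) • fn n) =
        ∑ n ∈ Finset.range N, (p n fun _ => 2 * w / τ) := by
      intro N
      rw [map_sum]
      apply Finset.sum_congr rfl
      intro n _
      rw [T.map_smul, smul_eq_mul, hpapply]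
    exact hcont.congr heq
  -- radius is infinite
  have hrad : p.radius = ⊤ := by
    apply ENNReal.eq_top_of_forall_nnreal_le
    intro r
    apply p.le_radius_of_tendsto (l := 0)
    -- terms tendsto 0 since series converges at z = r
    have hconv := htendT ((r : ℂ) * τ / 2)
    have hz : 2 * ((r : ℂ) * τ / 2) / τ = (r : ℂ) := by field_simp
    rw [hz] at hconv
    have hcauchy : Tendsto (fun n => (p n fun _ => (r : ℂ))) atTop (nhds 0) := by
      have h1 := hconv.comp (tendsto_add_atTop_nat 1)
      have hdiff := h1.sub hconv
      simp only [Function.comp] at hdiff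
      have : (fun N => (∑ n ∈ Finset.range (N + 1), (p n fun _ => (r:ℂ))) -
          ∑ n ∈ Finset.range N, (p n fun _ => (r:ℂ))) = fun N => (p N fun _ => (r:ℂ)) := by
        funext N
        rw [Finset.sum_range_succ]
        ring
      rw [this] at hdiff
      simpa using hdiff
    have hnorm : Tendsto (fun n => ‖(p n fun _ => (r : ℂ))‖) atTop (nhds 0) := by
      simpa using hcauchy.norm
    apply hnorm.congr
    intro n
    rw [hpapply, hpdef]
    rw [ContinuousMultilinearMap.norm_mkPiRing]
    rw [norm_mul, norm_div, norm_pow]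
    simp [Complex.norm_natCast]
    ring
  -- identify T (G w)
  have hkey : ∀ w : ℂ, T (G w) = Complex.exp (-w ^ 2 / τ) * p.sum (2 * w / τ) := by
    intro w
    have hball : (2 * w / τ) ∈ EMetric.ball (0 : ℂ) p.radius := by
      rw [hrad]
      exact edist_lt_top _ _
    have hsum := (p.hasSum hball).tendsto_sum_nat
    have := tendsto_nhds_unique (htendT w) hsum
    have hTsmul : T (Complex.exp (w ^ 2 / τ) • G w) = Complex.exp (w ^ 2 / τ) * T (G w) := by
      rw [T.map_smul, smul_eq_mul]
    rw [hTsmul] at this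
    have hne : Complex.exp (w ^ 2 / τ) ≠ 0 := Complex.exp_ne_zero _
    have h2 : T (G w) = (Complex.exp (w ^ 2 / τ))⁻¹ * p.sum (2 * w / τ) := by
      rw [← this]
      field_simp
    rw [h2, neg_div, Complex.exp_neg]
  -- differentiability
  have hps : Differentiable ℂ p.sum := by
    have h0 : 0 < p.radius := by rw [hrad]; exact ENNReal.zero_lt_top
    have hball := p.hasFPowerSeriesOnBall h0
    have huniv : Metric.eball (0 : ℂ) p.radius = Set.univ := by
      rw [hrad]
      exact Set.eq_univ_of_forall fun x => by simp [Metric.mem_eball, edist_lt_top]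
    have := hball.differentiableOn
    rw [huniv] at this
    exact differentiableOn_univ.mp this
  have hdiff : Differentiable ℂ fun w : ℂ => Complex.exp (-w ^ 2 / τ) * p.sum (2 * w / τ) := by
    apply Differentiable.mul
    · apply Differentiable.cexp
      exact (differentiable_pow 2).neg.div_const τ
    · exact hps.comp ((differentiable_id.const_mul 2).div_const τ)
  have hfin : (fun w : ℂ => T (G w)) =
      fun w : ℂ => Complex.exp (-w ^ 2 / τ) * p.sum (2 * w / τ) := funext hkey
  rw [hfin]
  exact hdiff
end

section
/- Let τ ∈ ℂ with τ ≠ 0 and α ∈ ℂ, and set g(w) = e^{−(w+α)²/τ}. Then g is an eigenfunction of the *_τ-multiplication by w_*² with eigenvalue α²: for all w ∈ ℂ, (τ²/4) g″(w) + τ w g′(w) + (w² + τ/2) g(w) = α² g(w). Consequently, for every t ∈ ℂ, the function (t,w) ↦ e^{tα²} g(w) is entire in t and solves the evolution equation ∂_t f = (τ²/4) ∂_w² f + τ w ∂_w f + (w² + τ/2) f with initial value g; i.e. :e_*^{t w_*²}:_τ *_τ :δ_*(w+α):_τ = e^{tα²} :δ_*(w+α):_τ, so e_*^{t w_*²} acts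 on δ_*(w+α) as a genuine one-parameter group without singularities. -/
open Complex

/-- `g(w) = e^{−(w+α)²/τ}`, a nonzero multiple of the `τ`-expression of the
`*`-delta function `δ_*(w+α)`. -/
noncomputable def deltaGauss (τ α : ℂ) : ℂ → ℂ := fun w =>
  Complex.exp (-(w + α) ^ 2 / τ)

lemma deltaGauss_hasDerivAt (τ α w : ℂ) :
    HasDerivAt (deltaGauss τ α) ((-2 * (w + α) / τ) * deltaGauss τ α w) w := by
  have h1 : HasDerivAt (fun w : ℂ => -(w + α) ^ 2 / τ) (-2 * (w + α) / τ) w := by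
    have : HasDerivAt (fun w : ℂ => (w + α) ^ 2) (2 * (w + α)) w := by
      simpa using ((hasDerivAt_id w).add_const α).fun_pow 2
    simpa [neg_div, neg_mul] using (this.neg.div_const τ)
  unfold deltaGauss; simpa [mul_comm] using h1.cexp

lemma deltaGauss_deriv (τ α : ℂ) :
    deriv (deltaGauss τ α) = fun w => (-2 * (w + α) / τ) * deltaGauss τ α w := by
  funext w
  exact (deltaGauss_hasDerivAt τ α w).deriv

lemma deltaGauss_deriv2 (τ α w : ℂ) :
    deriv (deriv (deltaGauss τ α)) w =
      (-2 / τ + (4 * (w + α) ^ 2) / τ ^ 2) * deltaGauss τ α w := by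
  rw [deltaGauss_deriv]
  have h1 : HasDerivAt (fun w : ℂ => -2 * (w + α) / τ) (-2 / τ) w := by
    simpa using (((hasDerivAt_id w).add_const α).const_mul (-2)).div_const τ
  have h := h1.fun_mul (deltaGauss_hasDerivAt τ α w)
  rw [h.deriv]
  field_simp
  ring

/-- For `τ ≠ 0`: `g` is an eigenfunction of `*_τ`-multiplication by `w_*²` with
eigenvalue `α²`, and `(t,w) ↦ e^{tα²} g(w)` is entire in `t`, equals `g` at `t = 0`,
and solves `∂_t f = (τ²/4) ∂_w² f + τ w ∂_w f + (w² + τ/2) f`, i.e.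
`:e_*^{t w_*²}:_τ *_τ :δ_*(w+α):_τ = e^{tα²} :δ_*(w+α):_τ` as a genuine
one-parameter group without singularities. -/
theorem starExpQuad_acts_on_delta (τ : ℂ) (hτ : τ ≠ 0) (α : ℂ) :
    (∀ w : ℂ,
      τ ^ 2 / 4 * deriv (deriv (deltaGauss τ α)) w +
        τ * w * deriv (deltaGauss τ α) w + (w ^ 2 + τ / 2) * deltaGauss τ α w
      = α ^ 2 * deltaGauss τ α w) ∧
    (∀ w : ℂ, Differentiable ℂ fun t : ℂ => Complex.exp (t * α ^ 2) * deltaGauss τ α w) ∧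
    (∀ w : ℂ, Complex.exp ((0 : ℂ) * α ^ 2) * deltaGauss τ α w = deltaGauss τ α w) ∧
    (∀ t w : ℂ,
      deriv (fun t' : ℂ => Complex.exp (t' * α ^ 2) * deltaGauss τ α w) t =
        τ ^ 2 / 4 * (Complex.exp (t * α ^ 2) * deriv (deriv (deltaGauss τ α)) w) +
          τ * w * (Complex.exp (t * α ^ 2) * deriv (deltaGauss τ α) w) +
          (w ^ 2 + τ / 2) * (Complex.exp (t * α ^ 2) * deltaGauss τ α w)) := by
  have eig : ∀ w : ℂ,
      τ ^ 2 / 4 * deriv (deriv (deltaGauss τ α)) w +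
        τ * w * deriv (deltaGauss τ α) w + (w ^ 2 + τ / 2) * deltaGauss τ α w
      = α ^ 2 * deltaGauss τ α w := by
    intro w
    rw [deltaGauss_deriv2, deltaGauss_deriv]
    have h2 : τ ^ 2 / 4 * ((-2 / τ + 4 * (w + α) ^ 2 / τ ^ 2) * deltaGauss τ α w)
        = (-τ / 2 + (w + α) ^ 2) * deltaGauss τ α w := by
      field_simp; ring
    have h3 : τ * w * (-2 * (w + α) / τ * deltaGauss τ α w)
        = -2 * w * (w + α) * deltaGauss τ α w := by
      field_simp
    rw [h2, h3]; ring
  have hdt : ∀ t : ℂ, HasDerivAt (fun t' : ℂ => Complex.exp (t' * α ^ 2))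
      (α ^ 2 * Complex.exp (t * α ^ 2)) t := by
    intro t
    simpa [mul_comm] using ((hasDerivAt_id t).mul_const (α ^ 2)).cexp
  refine ⟨eig, ?_, ?_, ?_⟩
  · intro w
    exact fun t => (((hdt t).differentiableAt).mul_const _)
  · intro w; simp
  · intro t w
    have h := ((hdt t).mul_const (deltaGauss τ α w)).deriv
    rw [h]
    have := eig w
    calc α ^ 2 * Complex.exp (t * α ^ 2) * deltaGauss τ α w
        = Complex.exp (t * α ^ 2) * (α ^ 2 * deltaGauss τ α w) := by ring
      _ = _ := by rw [← this]; ring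
end
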